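/- arXiv:2006.13787 — 2 statements merged into one kernel-verified Lean document; each statement's English description precedes it below -/
import Mathlib

section
/- Let S be an inverse semigroup with zero that is fundamental and whose semilattice of idempotents is 0-disjunctive, and let φ: S → T be a zero-preserving semigroup homomorphism to a semigroup with zero. Then the following are equivalent: (1) φ is injective; (2) the restriction of φ to E(S) is injective; (3) φ⁻¹(0) = {0}; (4) φ⁻¹(0) ∩ E(S) = {0}. -/
/-- An inverse semigroup with zero. -/
class InverseSemigroup0 (S : Type*) extends Semigroup S, Zero S, Star S where
  zero_mul : ∀ s : S, 0 * s = 0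
  mul_zero : ∀ s : S, s * 0 = 0
  mul_star_mul_self : ∀ s : S, s * star s * s = s
  star_mul_self_star : ∀ s : S, star s * s * star s = star s
  star_unique : ∀ s t : S, s * t * s = s → t * s * t = t → t = star s

/-- The natural partial order on an inverse semigroup. -/
def NatLe {S : Type*} [InverseSemigroup0 S] (a b : S) : Prop := a = b * star a * a

/-- `S` is fundamental: the centralizer of the idempotents consists of idempotents. -/
def Fundamental (S : Type*) [InverseSemigroup0 S] : Prop :=
  ∀ s : S, (∀ e : S, IsIdempotentElem e → s * e = e * s) → IsIdempotentElem s

/-- The semilattice of idempotents of `S` is 0-disjunctive. -/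
def ZeroDisjunctive (S : Type*) [InverseSemigroup0 S] : Prop :=
  ∀ e f : S, IsIdempotentElem e → IsIdempotentElem f → f ≠ 0 → NatLe f e → f ≠ e →
    ∃ g : S, g ≠ 0 ∧ IsIdempotentElem g ∧ NatLe g e ∧ f * g = 0

section Aux
variable {S : Type*} [InverseSemigroup0 S]

lemma isg_sss (s : S) : s * star s * s = s := InverseSemigroup0.mul_star_mul_self s
lemma isg_ssstar (s : S) : star s * s * star s = star s := InverseSemigroup0.star_mul_self_star s

lemma isg_star_eq {s t : S} (h1 : s * t * s = s) (h2 : t * s * t = t) : star s = t :=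
  (InverseSemigroup0.star_unique s t h1 h2).symm

lemma isg_star_idem {e : S} (he : IsIdempotentElem e) : star e = e :=
  isg_star_eq (by rw [he, he]) (by rw [he, he])

/-- helper: pull an idempotent through. -/
lemma isg_pull {e : S} (he : IsIdempotentElem e) (t : S) : e * (e * t) = e * t := by
  rw [← mul_assoc, he]

lemma isg_idem_ss (s : S) : IsIdempotentElem (s * star s) := by
  show s * star s * (s * star s) = s * star s
  rw [← mul_assoc, isg_sss]

lemma isg_idem_ss' (s : S) : IsIdempotentElem (star s * s) := by
  show star s * s * (star s * s) = star s * s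
  rw [← mul_assoc, isg_ssstar]

lemma isg_idem_mul {e f : S} (he : IsIdempotentElem e) (hf : IsIdempotentElem f) :
    IsIdempotentElem (e * f) := by
  set x := star (e * f) with hx
  have A : e * f * x * (e * f) = e * f := isg_sss (e * f)
  have B : x * (e * f) * x = x := isg_ssstar (e * f)
  have hgg : IsIdempotentElem (f * x * e) := by
    show f * x * e * (f * x * e) = f * x * e
    have : f * x * e * (f * x * e) = f * (x * (e * f) * x) * e := by
      simp only [mul_assoc]
    rw [this, B]
  have hg1 : e * f * (f * x * e) * (e * f) = e * f := by
    have : e * f * (f * x * e) * (e * f) = e * (f * (f * (x * (e * (e * f))))) := by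
      simp only [mul_assoc]
    rw [this, isg_pull he, isg_pull hf]
    have : e * (f * (x * (e * f))) = e * f * x * (e * f) := by simp only [mul_assoc]
    rw [this, A]
  have hg2 : f * x * e * (e * f) * (f * x * e) = f * x * e := by
    have : f * x * e * (e * f) * (f * x * e) = f * (x * (e * (e * (f * (f * (x * e)))))) := by
      simp only [mul_assoc]
    rw [this, isg_pull he, isg_pull hf]
    have : f * (x * (e * (f * (x * e)))) = f * (x * (e * f) * x) * e := by
      simp only [mul_assoc]
    rw [this, B]
  have hxg : x = f * x * e :=
    hx.trans (InverseSemigroup0.star_unique (e * f) (f * x * e) hg1 hg2).symm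
  have hef : e * f = star (f * x * e) := InverseSemigroup0.star_unique (f * x * e) (e * f) hg2 hg1
  rw [isg_star_idem hgg] at hef
  rw [hef, ← hxg]
  rw [hx] at hxg ⊢
  rw [← hxg] at hgg
  exact hgg

lemma isg_idem_comm {e f : S} (he : IsIdempotentElem e) (hf : IsIdempotentElem f) :
    e * f = f * e := by
  have hef := isg_idem_mul he hf
  have hfe := isg_idem_mul hf he
  have h1 : e * f * (f * e) * (e * f) = e * f := by
    have : e * f * (f * e) * (e * f) = e * (f * (f * (e * (e * f)))) := by
      simp only [mul_assoc]
    rw [this, isg_pull he, isg_pull hf, ← mul_assoc, hef]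
  have h2 : f * e * (e * f) * (f * e) = f * e := by
    have : f * e * (e * f) * (f * e) = f * (e * (e * (f * (f * e)))) := by
      simp only [mul_assoc]
    rw [this, isg_pull hf, isg_pull he, ← mul_assoc, hfe]
  have := isg_star_eq h1 h2
  rw [isg_star_idem hef] at this
  exact this

lemma isg_zero_idem : IsIdempotentElem (0 : S) := InverseSemigroup0.mul_zero 0

end Aux

lemma T_unique {T : Type*} [Semigroup T] {t u v : T}
    (hutu : u * t * u = u) (hvtv : v * t * v = v)
    (htut : t * u * t = t) (htvt : t * v * t = t)
    (hc1 : u * t * (v * t) = v * t * (u * t))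
    (hc2 : t * u * (t * v) = t * v * (t * u)) : u = v := by
  have e1 : u = v * t * u := by
    calc u = u * t * u := hutu.symm
      _ = u * (t * v * t) * u := by rw [htvt]
      _ = u * t * (v * t) * u := by simp only [mul_assoc]
      _ = v * t * (u * t) * u := by rw [hc1]
      _ = v * t * (u * t * u) := by simp only [mul_assoc]
      _ = v * t * u := by rw [hutu]
  have e2 : v = v * t * u := by
    calc v = v * t * v := hvtv.symm
      _ = v * (t * u * t) * v := by rw [htut]
      _ = v * (t * u * (t * v)) := by simp only [mul_assoc]
      _ = v * (t * v * (t * u)) := by rw [hc2]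
      _ = v * t * v * (t * u) := by simp only [mul_assoc]
      _ = v * (t * u) := by rw [hvtv]
      _ = v * t * u := by rw [← mul_assoc]
  rw [e1, ← e2]

/-- For a fundamental inverse semigroup with zero whose semilattice of idempotents is
0-disjunctive and a zero-preserving homomorphism `φ` to a semigroup with zero, the
following are equivalent: (1) `φ` is injective; (2) `φ` is injective on idempotents;
(3) `φ⁻¹(0) = {0}`; (4) `φ⁻¹(0) ∩ E(S) = {0}`. -/
theorem stmt1 {S T : Type*} [InverseSemigroup0 S] [Semigroup T] [Zero T]
    (hT0 : ∀ t : T, (0 : T) * t = 0 ∧ t * 0 = 0)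
    (hfund : Fundamental S) (hdisj : ZeroDisjunctive S)
    (φ : S → T) (hmul : ∀ a b : S, φ (a * b) = φ a * φ b) (h0 : φ 0 = 0) :
    List.TFAE [Function.Injective φ,
      Set.InjOn φ {e : S | IsIdempotentElem e},
      φ ⁻¹' {0} = {0},
      φ ⁻¹' {0} ∩ {e : S | IsIdempotentElem e} = {0}] := by
  tfae_have 1 → 3 := by
    intro h1
    ext s
    simp only [Set.mem_preimage, Set.mem_singleton_iff]
    constructor
    · intro hs; exact h1 (hs.trans h0.symm)
    · rintro rfl; exact h0
  tfae_have 3 → 4 := by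
    intro h3
    rw [h3]
    ext s
    simp only [Set.mem_inter_iff, Set.mem_singleton_iff, Set.mem_setOf_eq]
    constructor
    · rintro ⟨rfl, _⟩; rfl
    · rintro rfl; exact ⟨rfl, isg_zero_idem⟩
  tfae_have 4 → 2 := by
    intro h4
    have h4' : ∀ e : S, IsIdempotentElem e → φ e = 0 → e = 0 := by
      intro e he hφ
      have : e ∈ φ ⁻¹' {0} ∩ {e : S | IsIdempotentElem e} := ⟨hφ, he⟩
      rwa [h4, Set.mem_singleton_iff] at this
    have key : ∀ e f : S, IsIdempotentElem e → IsIdempotentElem f → φ e = φ f → e * f = e := by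
      intro e f he hf hq
      by_contra hne
      have hφef : φ (e * f) = φ e := by
        rw [hmul, hq, ← hmul, hf.eq]
      by_cases h0' : e * f = 0
      · have he0 : φ e = 0 := by rw [← hφef, h0', h0]
        have heq0 := h4' e he he0
        have hf0 : φ f = 0 := by rw [← hq, he0]
        have hfq0 := h4' f hf hf0
        exact hne (by rw [heq0, hfq0, InverseSemigroup0.zero_mul])
      · have hmulidem := isg_idem_mul he hf
        have hle : NatLe (e * f) e := by
          show e * f = e * star (e * f) * (e * f)
          rw [isg_star_idem hmulidem]
          conv_rhs => rw [mul_assoc, hmulidem.eq, ← mul_assoc, he.eq]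
        obtain ⟨g, hg0, hgidem, hgle, hfg⟩ := hdisj e (e * f) he hmulidem h0' hle hne
        have hgle' : g = e * star g * g := hgle
        rw [isg_star_idem hgidem, mul_assoc, hgidem.eq] at hgle'
        have hφg : φ g = 0 := by
          have h1 : φ g = φ (f * g) := by
            rw [hmul, ← hq, ← hmul, ← hgle']
          have h2 : φ (e * (f * g)) = φ g := by
            rw [hmul, ← h1, ← hmul, ← hgle']
          have h3 : e * (f * g) = 0 := by rw [← mul_assoc, hfg]
          rw [← h2, h3, h0]
        exact hg0 (h4' g hgidem hφg)
    intro e he f hf hq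
    have h1 := key e f he hf hq
    have h2 := key f e hf he hq.symm
    calc e = e * f := h1.symm
      _ = f * e := isg_idem_comm he hf
      _ = f := h2
  tfae_have 2 → 1 := by
    intro h2
    have h2' : ∀ e f : S, IsIdempotentElem e → IsIdempotentElem f → φ e = φ f → e = f :=
      fun e f he hf h => h2 he hf h
    intro a b hab
    have ha1 : a * star a * a = a := isg_sss a
    have ha2 : star a * a * star a = star a := isg_ssstar a
    have hb1 : b * star b * b = b := isg_sss b
    have hb2 : star b * b * star b = star b := isg_ssstar b
    -- φ (star a) = φ (star b)
    have huv' : φ (star a) = φ (star b) := by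
      refine T_unique (t := φ a) ?_ ?_ ?_ ?_ ?_ ?_
      · rw [← hmul, ← hmul, ha2]
      · rw [hab, ← hmul, ← hmul, hb2]
      · rw [← hmul, ← hmul, ha1]
      · rw [hab, ← hmul, ← hmul, hb1]
      · rw [show φ (star b) * φ a = φ (star b * b) by rw [hab, ← hmul],
          show φ (star a) * φ a = φ (star a * a) from (hmul _ _).symm,
          ← hmul, ← hmul, isg_idem_comm (isg_idem_ss' a) (isg_idem_ss' b)]
      · rw [show φ a * φ (star b) = φ (b * star b) by rw [hab, ← hmul],
          show φ a * φ (star a) = φ (a * star a) from (hmul _ _).symm,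
          ← hmul, ← hmul, isg_idem_comm (isg_idem_ss a) (isg_idem_ss b)]
    have hE1 : a * star a = b * star b :=
      h2' _ _ (isg_idem_ss a) (isg_idem_ss b) (by rw [hmul, hmul, hab, huv'])
    -- conjugation by a and b agree on idempotents
    have hconjidem : ∀ s g : S, IsIdempotentElem g → IsIdempotentElem (s * g * star s) := by
      intro s g hg
      show s * g * star s * (s * g * star s) = s * g * star s
      have h1 : s * g * star s * (s * g * star s) = s * (g * (star s * s) * g) * star s := by
        simp only [mul_assoc]
      rw [h1, isg_idem_comm hg (isg_idem_ss' s), mul_assoc (star s * s) g g, hg.eq]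
      have h2 : s * (star s * s * g) * star s = s * star s * s * (g * star s) := by
        simp only [mul_assoc]
      rw [h2, isg_sss, ← mul_assoc]
    have hconj : ∀ g : S, IsIdempotentElem g → a * g * star a = b * g * star b := by
      intro g hg
      refine h2' _ _ (hconjidem a g hg) (hconjidem b g hg) ?_
      rw [hmul, hmul, hmul, hmul, hab, huv']
    -- x := star a * b commutes with all idempotents
    have hx_comm : ∀ g : S, IsIdempotentElem g → (star a * b) * g = g * (star a * b) := by
      intro g hg
      have hbg : b * g = b * g * star b * b := by
        have h1 : b * g * star b * b = b * (g * (star b * b)) := by simp only [mul_assoc]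
        rw [h1, isg_idem_comm hg (isg_idem_ss' b), ← mul_assoc, ← mul_assoc, hb1]
      have hfa : star a * a * (star a * b) = star a * b := by
        have h : star a * a * (star a * b) = star a * a * star a * b := by
          simp only [mul_assoc]
        rw [h, ha2]
      calc star a * b * g = star a * (b * g) := by rw [mul_assoc]
        _ = star a * (b * g * star b * b) := by rw [← hbg]
        _ = star a * (a * g * star a * b) := by rw [← hconj g hg]
        _ = star a * a * g * (star a * b) := by simp only [mul_assoc]
        _ = g * (star a * a) * (star a * b) := by rw [isg_idem_comm (isg_idem_ss' a) hg]
        _ = g * (star a * a * (star a * b)) := by simp only [mul_assoc]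
        _ = g * (star a * b) := by rw [hfa]
    have hxidem : IsIdempotentElem (star a * b) := hfund _ hx_comm
    have hE1' : ∀ t : S, b * (star b * t) = a * (star a * t) := fun t => by
      rw [← mul_assoc, ← mul_assoc, hE1]
    have hss : ∀ t : S, star a * (a * (star a * t)) = star a * t := fun t => by
      rw [← mul_assoc, ← mul_assoc, ha2]
    have hssb : ∀ t : S, star b * (b * (star b * t)) = star b * t := fun t => by
      rw [← mul_assoc, ← mul_assoc, hb2]
    have hE1'' : ∀ t : S, a * (star a * t) = b * (star b * t) := fun t => (hE1' t).symm
    have hxyx : (star a * b) * (star b * a) * (star a * b) = star a * b := by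
      have h1 : (star a * b) * (star b * a) * (star a * b)
          = star a * (b * (star b * (a * (star a * b)))) := by simp only [mul_assoc]
      rw [h1, hE1', hss, hss]
    have hyxy : (star b * a) * (star a * b) * (star b * a) = star b * a := by
      have h1 : (star b * a) * (star a * b) * (star b * a)
          = star b * (a * (star a * (b * (star b * a)))) := by simp only [mul_assoc]
      rw [h1, hE1'', hssb, hssb]
    have hy : star (star a * b) = star b * a := isg_star_eq hxyx hyxy
    have hxy : star a * b = star b * a := by rw [← isg_star_idem hxidem, hy]
    have hxyf : (star a * b) * (star b * a) = star a * a := by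
      have h1 : (star a * b) * (star b * a) = star a * (b * (star b * a)) := by
        simp only [mul_assoc]
      rw [h1, hE1', hss]
    have hxf : star a * b = star a * a := by
      rw [← hxyf, ← hxy, hxidem.eq]
    calc a = a * star a * a := ha1.symm
      _ = a * (star a * a) := by rw [mul_assoc]
      _ = a * (star a * b) := by rw [← hxf]
      _ = b * star b * b := by rw [← mul_assoc, hE1]
      _ = b := hb1
  tfae_finish
end

section
/- Let S be a Boolean inverse semigroup and μ its largest idempotent-separating congruence (s μ t iff s e s* = t e t* for all idempotents e). Then μ is compatible with skew difference and skew addition; consequently S/μ is a Boolean inverse semigroup and the projection S → S/μ is additive. -/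
/-- Two elements are compatible if `s t*` and `s* t` are idempotent. -/
def Compat {S : Type*} [InverseSemigroup0 S] (s t : S) : Prop :=
  IsIdempotentElem (s * star t) ∧ IsIdempotentElem (star s * t)

/-- A Boolean inverse semigroup: an inverse semigroup with zero whose idempotents form
a (generalized) Boolean algebra (witnessed by the relative complement `\`), possessing
joins of compatible pairs over which multiplication distributes. -/
class BooleanInverseSemigroup0 (S : Type*) extends InverseSemigroup0 S, Max S, SDiff S where
  le_sup_left : ∀ s t : S, Compat s t → NatLe s (s ⊔ t)
  le_sup_right : ∀ s t : S, Compat s t → NatLe t (s ⊔ t)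
  sup_le : ∀ s t u : S, Compat s t → NatLe s u → NatLe t u → NatLe (s ⊔ t) u
  mul_sup : ∀ a s t : S, Compat s t → a * (s ⊔ t) = (a * s) ⊔ (a * t)
  sup_mul : ∀ a s t : S, Compat s t → (s ⊔ t) * a = (s * a) ⊔ (t * a)
  sdiff_idem : ∀ e f : S, IsIdempotentElem e → IsIdempotentElem f → IsIdempotentElem (e \ f)
  sdiff_le : ∀ e f : S, IsIdempotentElem e → IsIdempotentElem f → NatLe (e \ f) e
  sdiff_mul : ∀ e f : S, IsIdempotentElem e → IsIdempotentElem f → (e \ f) * f = 0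
  sdiff_sup : ∀ e f : S, IsIdempotentElem e → IsIdempotentElem f → (e \ f) ⊔ (e * f) = e

variable {S : Type*} [BooleanInverseSemigroup0 S]

/-- The skew difference `s ⊖ t = (s s* \ t t*) s (s* s \ t* t)`. -/
def skewDiff (s t : S) : S :=
  ((s * star s) \ (t * star t)) * s * ((star s * s) \ (star t * t))

/-- The skew addition `s ▽ t = (s ⊖ t) ∨ t`. -/
def skewAdd (s t : S) : S := skewDiff s t ⊔ t

/-- The maximal idempotent-separating congruence `μ`:
`s μ t` iff `s e s* = t e t*` for all idempotents `e`. -/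
def muRel (s t : S) : Prop :=
  ∀ e : S, IsIdempotentElem e → s * e * star s = t * e * star t

/-- `π : S → Q` is an additive projection: zero- and multiplication-preserving, and
preserving joins of compatible pairs. -/
def IsAdditiveProj {S Q : Type*} [BooleanInverseSemigroup0 S] [BooleanInverseSemigroup0 Q]
    (π : S → Q) : Prop :=
  π 0 = 0 ∧ (∀ a b : S, π (a * b) = π a * π b) ∧
    ∀ a b : S, Compat a b → π (a ⊔ b) = π a ⊔ π b


/-! ### Basic inverse semigroup lemmas -/

section Basics
variable {T : Type*} [InverseSemigroup0 T]

lemma sss (s : T) : s * star s * s = s := InverseSemigroup0.mul_star_mul_self s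
lemma s's' (s : T) : star s * s * star s = star s := InverseSemigroup0.star_mul_self_star s

lemma sstar (s : T) : star (star s) = s :=
  (InverseSemigroup0.star_unique (star s) s (s's' s) (sss s)).symm

lemma idem_sm (s : T) : IsIdempotentElem (star s * s) := by
  show star s * s * (star s * s) = star s * s
  rw [mul_assoc, ← mul_assoc s, sss]

lemma idem_ms (s : T) : IsIdempotentElem (s * star s) := by
  show s * star s * (s * star s) = s * star s
  rw [mul_assoc, ← mul_assoc (star s), s's']

lemma star_of_idem {e : T} (he : IsIdempotentElem e) : star e = e := by
  have h : e * e * e = e := by rw [he.eq, he.eq]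
  exact (InverseSemigroup0.star_unique e e h h).symm

/-- Product of idempotents is idempotent. -/
lemma idem_mul {e f : T} (he : IsIdempotentElem e) (hf : IsIdempotentElem f) :
    IsIdempotentElem (e * f) := by
  obtain ⟨x, hx1, hx2⟩ : ∃ x : T, (e*f) * x * (e*f) = e*f ∧ x * (e*f) * x = x ∧
      x = star (e * f) := ⟨star (e*f), sss _, s's' _, rfl⟩
  obtain ⟨hx2, hx3⟩ := hx2
  have h1 : e * f * (f * x * e) * (e * f) = e * f := by
    have e1 : e * f * (f * x * e) * (e * f) = e * (f * f) * x * (e * e) * f := by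
      simp only [mul_assoc]
    rw [e1, hf.eq, he.eq, mul_assoc (e*f*x) e f, hx1]
  have h2 : f * x * e * (e * f) * (f * x * e) = f * x * e := by
    have e1 : f * x * e * (e * f) * (f * x * e) = f * (x * (e * e) * (f * f) * x) * e := by
      simp only [mul_assoc]
    rw [e1, he.eq, hf.eq]
    have e2 : x * e * f * x = x * (e * f) * x := by rw [mul_assoc x e f]
    rw [e2, hx2]
  have hfxe : f * x * e = x := hx3 ▸ InverseSemigroup0.star_unique (e*f) (f*x*e) h1 h2
  have hxidem : IsIdempotentElem x := by
    show x * x = x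
    have e0 : x * x = f * x * e * (f * x * e) := by rw [hfxe]
    have e2 : f * x * e * (f * x * e) = f * (x * (e * f) * x) * e := by simp only [mul_assoc]
    rw [e0, e2, hx2, hfxe]
  have hef : e * f = star x := by rw [hx3, sstar]
  rw [hef, star_of_idem hxidem]
  exact hxidem

/-- Idempotents commute. -/
lemma idem_comm {e f : T} (he : IsIdempotentElem e) (hf : IsIdempotentElem f) :
    e * f = f * e := by
  have hef : IsIdempotentElem (e * f) := idem_mul he hf
  have hfe : IsIdempotentElem (f * e) := idem_mul hf he
  have h1 : e * f * (f * e) * (e * f) = e * f := by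
    have e1 : e * f * (f * e) * (e * f) = e * (f * f) * (e * e) * f := by
      simp only [mul_assoc]
    rw [e1, hf.eq, he.eq, mul_assoc (e*f) e f, hef.eq]
  have h2 : f * e * (e * f) * (f * e) = f * e := by
    have e1 : f * e * (e * f) * (f * e) = f * (e * e) * (f * f) * e := by
      simp only [mul_assoc]
    rw [e1, he.eq, hf.eq, mul_assoc (f*e) f e, hfe.eq]
  have h3 : f * e = star (e * f) := InverseSemigroup0.star_unique (e*f) (f*e) h1 h2
  rw [h3, star_of_idem hef]

lemma starm (a b : T) : star (a * b) = star b * star a := by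
  have h1 : a * b * (star b * star a) * (a * b) = a * b := by
    have e1 : a * b * (star b * star a) * (a * b) =
        a * (b * star b * (star a * a)) * b := by simp only [mul_assoc]
    rw [e1, idem_comm (idem_ms b) (idem_sm a)]
    have e2 : a * (star a * a * (b * star b)) * b = (a * star a * a) * (b * star b * b) := by
      simp only [mul_assoc]
    rw [e2, sss, sss]
  have h2 : star b * star a * (a * b) * (star b * star a) = star b * star a := by
    have e1 : star b * star a * (a * b) * (star b * star a) =
        star b * (star a * a * (b * star b)) * star a := by simp only [mul_assoc]
    rw [e1, idem_comm (idem_sm a) (idem_ms b)]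
    have e2 : star b * (b * star b * (star a * a)) * star a =
        (star b * b * star b) * (star a * a * star a) := by simp only [mul_assoc]
    rw [e2, s's', s's']
  exact (InverseSemigroup0.star_unique (a*b) (star b * star a) h1 h2).symm

lemma szero : star (0 : T) = 0 := by
  have h : (0 : T) * 0 * 0 = 0 := by rw [InverseSemigroup0.zero_mul, InverseSemigroup0.zero_mul]
  exact (InverseSemigroup0.star_unique 0 0 h h).symm

lemma idem_zero : IsIdempotentElem (0 : T) := by
  show (0:T) * 0 = 0; exact InverseSemigroup0.zero_mul 0

end Basics

/-! ### Natural order and compatibility -/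

section Order
variable {T : Type*} [InverseSemigroup0 T]

lemma natle_refl (a : T) : NatLe a a := (sss a).symm

lemma natle_right {a b : T} (h : NatLe a b) : a = b * (star a * a) := by
  rw [← mul_assoc]; exact h

lemma natle_of_right {a b f : T} (hf : IsIdempotentElem f) (h : a = b * f) : NatLe a b := by
  have hsa : star a = f * star b := by rw [h, starm, star_of_idem hf]
  show a = b * star a * a
  rw [hsa, h]
  refine Eq.symm ?_
  calc b * (f * star b) * (b * f)
      = b * (f * (star b * b)) * f := by simp only [mul_assoc]
    _ = b * (star b * b * f) * f := by rw [idem_comm hf (idem_sm b)]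
    _ = (b * star b * b) * (f * f) := by simp only [mul_assoc]
    _ = b * f := by rw [sss, hf.eq]

lemma natle_of_left {a b e : T} (he : IsIdempotentElem e) (h : a = e * b) : NatLe a b := by
  have hsa : star a = star b * e := by rw [h, starm, star_of_idem he]
  show a = b * star a * a
  rw [hsa, h]
  refine Eq.symm ?_
  calc b * (star b * e) * (e * b)
      = (b * star b) * (e * e) * b := by simp only [mul_assoc]
    _ = (b * star b) * e * b := by rw [he.eq]
    _ = e * (b * star b) * b := by rw [idem_comm (idem_ms b) he]
    _ = e * (b * star b * b) := by simp only [mul_assoc]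
    _ = e * b := by rw [sss]

lemma natle_msb {a b : T} (h : NatLe a b) : a * star b = a * star a := by
  have hsa : star a = (star a * a) * star b := by
    conv_lhs => rw [natle_right h]
    rw [starm, star_of_idem (idem_sm a)]
  refine Eq.symm ?_
  calc a * star a = a * ((star a * a) * star b) := by rw [← hsa]
    _ = (a * star a * a) * star b := by simp only [mul_assoc]
    _ = a * star b := by rw [sss]

lemma natle_left {a b : T} (h : NatLe a b) : a = (a * star a) * b := by
  refine Eq.symm ?_
  calc (a * star a) * b = (a * star b) * b := by rw [natle_msb h]
    _ = a * (star b * b) := by simp only [mul_assoc]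
    _ = (b * (star a * a)) * (star b * b) := by rw [← natle_right h]
    _ = b * ((star a * a) * (star b * b)) := by simp only [mul_assoc]
    _ = b * ((star b * b) * (star a * a)) := by rw [idem_comm (idem_sm a) (idem_sm b)]
    _ = (b * star b * b) * (star a * a) := by simp only [mul_assoc]
    _ = b * (star a * a) := by rw [sss]
    _ = a := (natle_right h).symm

lemma natle_star {a b : T} (h : NatLe a b) : NatLe (star a) (star b) := by
  refine natle_of_right (idem_ms a) ?_
  conv_lhs => rw [natle_left h]
  rw [starm, star_of_idem (idem_ms a)]

lemma natle_sbm {a b : T} (h : NatLe a b) : star b * a = star a * a := by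
  have lem1 : star a * b = star a * a := by
    have := natle_msb (natle_star h)
    rwa [sstar, sstar] at this
  calc star b * a = star (star a * b) := by rw [starm, sstar]
    _ = star (star a * a) := by rw [lem1]
    _ = star a * a := star_of_idem (idem_sm a)

lemma natle_trans {a b c : T} (h1 : NatLe a b) (h2 : NatLe b c) : NatLe a c := by
  refine natle_of_left (idem_mul (idem_ms a) (idem_ms b)) ?_
  conv_lhs => rw [natle_left h1, natle_left h2]
  simp only [mul_assoc]

lemma natle_antisymm {a b : T} (h1 : NatLe a b) (h2 : NatLe b a) : a = b := by
  calc a = b * (star a * a) := natle_right h1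
    _ = b * (star b * a) := by rw [natle_sbm h1]
    _ = (b * star b) * a := by rw [← mul_assoc]
    _ = b := (natle_left h2).symm

lemma mul_idem_natle {f : T} (a : T) (hf : IsIdempotentElem f) : NatLe (a * f) a :=
  natle_of_right hf rfl

lemma idem_mul_natle {e : T} (a : T) (he : IsIdempotentElem e) : NatLe (e * a) a :=
  natle_of_left he rfl

lemma zero_natle (a : T) : NatLe (0 : T) a :=
  natle_of_left idem_zero (InverseSemigroup0.zero_mul a).symm

lemma natle_zero {a : T} (h : NatLe a 0) : a = 0 := by
  rw [natle_left h, InverseSemigroup0.mul_zero]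

lemma natle_idem {a e : T} (he : IsIdempotentElem e) (h : NatLe a e) : IsIdempotentElem a := by
  have := idem_mul (idem_ms a) he
  rwa [← natle_left h] at this

lemma natle_idem_mul {x p : T} (hx : IsIdempotentElem x) (hp : IsIdempotentElem p)
    (h : NatLe x p) : x * p = x := by
  have h1 : x = p * x := by
    conv_lhs => rw [natle_right h]
    rw [star_of_idem hx, hx.eq]
  rw [idem_comm hx hp, ← h1]

lemma natle_of_idem_mul {x p : T} (hx : IsIdempotentElem x)
    (h : x * p = x) : NatLe x p :=
  natle_of_left hx h.symm

lemma conj_idem {x : T} (hx : IsIdempotentElem x) (a : T) :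
    IsIdempotentElem (a * x * star a) := by
  show (a * x * star a) * (a * x * star a) = a * x * star a
  calc (a * x * star a) * (a * x * star a)
      = a * (x * (star a * a) * x) * star a := by simp only [mul_assoc]
    _ = a * ((star a * a) * x * x) * star a := by rw [idem_comm hx (idem_sm a)]
    _ = (a * (star a * a)) * ((x * x) * star a) := by simp only [mul_assoc]
    _ = (a * star a * a) * (x * star a) := by rw [hx.eq]; simp only [mul_assoc]
    _ = a * x * star a := by rw [sss]; simp only [mul_assoc]

lemma conj_idem' {x : T} (hx : IsIdempotentElem x) (a : T) :
    IsIdempotentElem (star a * x * a) := by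
  have h := conj_idem hx (star a)
  rwa [sstar] at h

lemma idem_sandwich {e y : T} (he : IsIdempotentElem e) (hy : IsIdempotentElem y) :
    e * y * e = e * y := by
  rw [mul_assoc, idem_comm hy he, ← mul_assoc, he.eq]

lemma idem_star {e : T} (he : IsIdempotentElem e) : IsIdempotentElem (star e) := by
  rw [star_of_idem he]; exact he

lemma compat_symm {s t : T} (h : Compat s t) : Compat t s := by
  constructor
  · have e1 : t * star s = star (s * star t) := by rw [starm, sstar]
    rw [e1]; exact idem_star h.1
  · have e1 : star t * s = star (star s * t) := by rw [starm, sstar]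
    rw [e1]; exact idem_star h.2

lemma compat_star {s t : T} (h : Compat s t) : Compat (star s) (star t) := by
  constructor
  · rw [sstar]; exact h.2
  · rw [sstar]; exact h.1

lemma idem_compat {e f : T} (he : IsIdempotentElem e) (hf : IsIdempotentElem f) :
    Compat e f :=
  ⟨by rw [star_of_idem hf]; exact idem_mul he hf,
   by rw [star_of_idem he]; exact idem_mul he hf⟩

lemma compat_refl (s : T) : Compat s s := ⟨idem_ms s, idem_sm s⟩

lemma compat_mono {a b c d : T} (hab : NatLe a b) (hcd : NatLe c d) (h : Compat b d) :
    Compat a c := by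
  constructor
  · have hsc : star c = star d * (c * star c) := by
      conv_lhs => rw [natle_left hcd]
      rw [starm, star_of_idem (idem_ms c)]
    have e1 : a * star c = (a * star a) * (b * star d) * (c * star c) := by
      conv_lhs => rw [natle_left hab, hsc]
      simp only [mul_assoc]
    rw [e1]; exact idem_mul (idem_mul (idem_ms a) h.1) (idem_ms c)
  · have hsa : star a = (star a * a) * star b := by
      conv_lhs => rw [natle_right hab]
      rw [starm, star_of_idem (idem_sm a)]
    have e1 : star a * c = (star a * a) * (star b * d) * (star c * c) := by
      conv_lhs => rw [hsa, natle_right hcd]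
      simp only [mul_assoc]
    rw [e1]; exact idem_mul (idem_mul (idem_sm a) h.2) (idem_sm c)

lemma compat_mull {s t : T} (h : Compat s t) (a : T) : Compat (a * s) (a * t) := by
  constructor
  · have e1 : (a * s) * star (a * t) = a * (s * star t) * star a := by
      rw [starm]; simp only [mul_assoc]
    rw [e1]; exact conj_idem h.1 a
  · have key : (star s * t) * (star t * (star a * a) * t) = star s * (star a * a) * t := by
      calc (star s * t) * (star t * (star a * a) * t)
          = star s * ((t * star t) * (star a * a)) * t := by simp only [mul_assoc]
        _ = star s * ((star a * a) * (t * star t)) * t := by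
            rw [idem_comm (idem_ms t) (idem_sm a)]
        _ = (star s * (star a * a)) * (t * star t * t) := by simp only [mul_assoc]
        _ = star s * (star a * a) * t := by rw [sss]
    have e2 : star (a * s) * (a * t) = star s * (star a * a) * t := by
      rw [starm]; simp only [mul_assoc]
    rw [e2, ← key]
    exact idem_mul h.2 (conj_idem' (idem_sm a) t)

lemma compat_mulr {s t : T} (h : Compat s t) (a : T) : Compat (s * a) (t * a) := by
  constructor
  · have key : (s * star t) * (t * (a * star a) * star t) = s * (a * star a) * star t := by
      calc (s * star t) * (t * (a * star a) * star t)
          = s * ((star t * t) * (a * star a)) * star t := by simp only [mul_assoc]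
        _ = s * ((a * star a) * (star t * t)) * star t := by
            rw [idem_comm (idem_sm t) (idem_ms a)]
        _ = (s * (a * star a)) * (star t * t * star t) := by simp only [mul_assoc]
        _ = s * (a * star a) * star t := by rw [s's']
    have e2 : (s * a) * star (t * a) = s * (a * star a) * star t := by
      rw [starm]; simp only [mul_assoc]
    rw [e2, ← key]
    exact idem_mul h.1 (conj_idem (idem_ms a) t)
  · have e1 : star (s * a) * (t * a) = star a * (star s * t) * a := by
      rw [starm]; simp only [mul_assoc]
    rw [e1]; exact conj_idem' h.2 a

end Order

/-! ### Joins and Boolean lemmas -/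

section Sup
variable {T : Type*} [BooleanInverseSemigroup0 T]

open BooleanInverseSemigroup0 (le_sup_left le_sup_right sup_le mul_sup sup_mul
  sdiff_idem sdiff_le sdiff_mul sdiff_sup)

lemma compat_of_natle {a b : T} (h : NatLe a b) : Compat a b :=
  compat_mono h (natle_refl b) (compat_refl b)

lemma sup_absorb {a b : T} (h : NatLe a b) : a ⊔ b = b :=
  natle_antisymm (sup_le a b b (compat_of_natle h) h (natle_refl b))
    (le_sup_right a b (compat_of_natle h))

lemma sup_absorb' {a b : T} (h : NatLe a b) : b ⊔ a = b :=
  natle_antisymm (sup_le b a b (compat_symm (compat_of_natle h)) (natle_refl b) h)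
    (le_sup_left b a (compat_symm (compat_of_natle h)))

lemma zero_sup (a : T) : (0 : T) ⊔ a = a := sup_absorb (zero_natle a)

lemma sup_zero (a : T) : a ⊔ (0 : T) = a := sup_absorb' (zero_natle a)

lemma supidem {e f : T} (he : IsIdempotentElem e) (hf : IsIdempotentElem f) :
    IsIdempotentElem (e ⊔ f) := by
  have hc := idem_compat he hf
  show (e ⊔ f) * (e ⊔ f) = e ⊔ f
  rw [sup_mul (e ⊔ f) e f hc, mul_sup e e f hc, mul_sup f e f hc, he.eq, hf.eq,
    sup_absorb' (mul_idem_natle e hf), sup_absorb (mul_idem_natle f he)]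

lemma sup_mono {a b a' b' : T} (ha : NatLe a a') (hb : NatLe b b') (h' : Compat a' b') :
    NatLe (a ⊔ b) (a' ⊔ b') :=
  sup_le a b (a' ⊔ b') (compat_mono ha hb h')
    (natle_trans ha (le_sup_left a' b' h')) (natle_trans hb (le_sup_right a' b' h'))

lemma star_sup {s t : T} (h : Compat s t) : star (s ⊔ t) = star s ⊔ star t := by
  refine natle_antisymm ?_ ?_
  · have hs : NatLe s (star (star s ⊔ star t)) := by
      have := natle_star (le_sup_left (star s) (star t) (compat_star h))
      rwa [sstar] at this
    have ht : NatLe t (star (star s ⊔ star t)) := by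
      have := natle_star (le_sup_right (star s) (star t) (compat_star h))
      rwa [sstar] at this
    have := natle_star (sup_le s t _ h hs ht)
    rwa [sstar] at this
  · exact sup_le _ _ _ (compat_star h) (natle_star (le_sup_left s t h))
      (natle_star (le_sup_right s t h))

lemma compat_sup {s x y : T} (hxy : Compat x y) (hx : Compat s x) (hy : Compat s y) :
    Compat s (x ⊔ y) := by
  constructor
  · rw [star_sup hxy, mul_sup s (star x) (star y) (compat_star hxy)]
    exact supidem hx.1 hy.1
  · rw [mul_sup (star s) x y hxy]
    exact supidem hx.2 hy.2

lemma compat_of_orth {s t : T} (h1 : s * star t = 0) (h2 : star s * t = 0) : Compat s t :=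
  ⟨by rw [h1]; exact idem_zero, by rw [h2]; exact idem_zero⟩

lemma idem_mul_sdiff_eq {x p e : T} (hx : IsIdempotentElem x) (hp : IsIdempotentElem p)
    (he : IsIdempotentElem e) (hxp : NatLe x p) (hxe : x * e = 0) : x * (p \ e) = x := by
  have h1 : x * ((p \ e) ⊔ (p * e)) = x * (p \ e) ⊔ x * (p * e) :=
    mul_sup x (p \ e) (p * e) (idem_compat (sdiff_idem p e hp he) (idem_mul hp he))
  rw [sdiff_sup p e hp he, natle_idem_mul hx hp hxp] at h1
  have h2 : x * (p * e) = 0 := by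
    rw [← mul_assoc, natle_idem_mul hx hp hxp, hxe]
  rw [h2, sup_zero] at h1
  exact h1.symm

lemma sdiffuniq {p q z : T} (hp : IsIdempotentElem p) (hq : IsIdempotentElem q)
    (hz : IsIdempotentElem z) (h1 : z * q = 0) (h2 : NatLe z p)
    (h3 : z ⊔ (p * q) = p) : z = p \ q := by
  have hd : IsIdempotentElem (p \ q) := sdiff_idem p q hp hq
  have hzd : z = z * (p \ q) := by
    have e1 : z * ((p \ q) ⊔ (p * q)) = z * (p \ q) ⊔ z * (p * q) :=
      mul_sup z _ _ (idem_compat hd (idem_mul hp hq))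
    rw [sdiff_sup p q hp hq, natle_idem_mul hz hp h2] at e1
    have e2 : z * (p * q) = 0 := by rw [← mul_assoc, natle_idem_mul hz hp h2, h1]
    rw [e2, sup_zero] at e1
    exact e1
  have hdp : (p \ q) * p = p \ q := natle_idem_mul hd hp (sdiff_le p q hp hq)
  have hdz : p \ q = (p \ q) * z := by
    have hc : Compat z (p * q) := compat_mono h2 (mul_idem_natle p hq) (compat_refl p)
    have e1 : (p \ q) * (z ⊔ (p * q)) = (p \ q) * z ⊔ (p \ q) * (p * q) :=
      mul_sup _ _ _ hc
    have e2 : (p \ q) * (p * q) = 0 := by rw [← mul_assoc, hdp, sdiff_mul p q hp hq]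
    rw [h3, hdp, e2, sup_zero] at e1
    exact e1
  rw [hzd, idem_comm hz hd, ← hdz]

lemma conj_sdiff (s : T) {y : T} (hy : IsIdempotentElem y) :
    s * ((star s * s) \ y) * star s = (s * star s) \ (s * y * star s) := by
  have hss := idem_sm s
  have hms := idem_ms s
  have hF : IsIdempotentElem ((star s * s) \ y) := sdiff_idem _ _ hss hy
  have hFle : NatLe ((star s * s) \ y) (star s * s) := sdiff_le _ _ hss hy
  have hFss : ((star s * s) \ y) * (star s * s) = (star s * s) \ y :=
    natle_idem_mul hF hss hFle
  set F := (star s * s) \ y with hFdef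
  have h1 : (s * F * star s) * (s * y * star s) = 0 := by
    calc (s * F * star s) * (s * y * star s)
        = s * (F * (star s * s) * y) * star s := by simp only [mul_assoc]
      _ = s * (F * y) * star s := by rw [hFss]
      _ = 0 := by
          rw [hFdef, sdiff_mul _ _ hss hy, InverseSemigroup0.mul_zero,
            InverseSemigroup0.zero_mul]
  have h2 : NatLe (s * F * star s) (s * star s) := by
    refine natle_of_idem_mul (conj_idem hF s) ?_
    calc (s * F * star s) * (s * star s)
        = s * F * (star s * s * star s) := by simp only [mul_assoc]
      _ = s * F * star s := by rw [s's']
  have hh : IsIdempotentElem ((star s * s) * y) := idem_mul hss hy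
  have hkey : (s * ((star s * s) * y)) * star s = s * y * star s := by
    calc (s * ((star s * s) * y)) * star s
        = (s * star s * s) * (y * star s) := by simp only [mul_assoc]
      _ = s * (y * star s) := by rw [sss]
      _ = s * y * star s := by simp only [mul_assoc]
  have h3 : (s * F * star s) ⊔ ((s * star s) * (s * y * star s)) = s * star s := by
    have hpq : (s * star s) * (s * y * star s) = s * y * star s := by
      calc (s * star s) * (s * y * star s)
          = (s * star s * s) * (y * star s) := by simp only [mul_assoc]
        _ = s * (y * star s) := by rw [sss]
        _ = s * y * star s := by simp only [mul_assoc]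
    have hcomp : Compat (s * F) (s * ((star s * s) * y)) :=
      compat_mull (idem_compat hF hh) s
    rw [hpq]
    calc (s * F * star s) ⊔ (s * y * star s)
        = ((s * F) * star s) ⊔ ((s * ((star s * s) * y)) * star s) := by rw [hkey]
      _ = ((s * F) ⊔ (s * ((star s * s) * y))) * star s :=
          (sup_mul (star s) _ _ hcomp).symm
      _ = (s * (F ⊔ (star s * s) * y)) * star s := by
          rw [← mul_sup s _ _ (idem_compat hF hh)]
      _ = (s * (star s * s)) * star s := by rw [hFdef, sdiff_sup _ _ hss hy]
      _ = (s * star s) * (s * star s) := by simp only [mul_assoc]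
      _ = s * star s := (idem_ms s).eq
  exact sdiffuniq hms (conj_idem hy s) (conj_idem hF s) h1 h2 h3

end Sup

/-! ### Lemmas about μ -/

section Mu
variable {T : Type*} [BooleanInverseSemigroup0 T]

open BooleanInverseSemigroup0 (le_sup_left le_sup_right sup_le mul_sup sup_mul
  sdiff_idem sdiff_le sdiff_mul sdiff_sup)

lemma mu_refl (s : T) : muRel s s := fun _ _ => rfl
lemma mu_symm {s t : T} (h : muRel s t) : muRel t s := fun e he => (h e he).symm
lemma mu_trans {s t u : T} (h1 : muRel s t) (h2 : muRel t u) : muRel s u :=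
  fun e he => (h1 e he).trans (h2 e he)

lemma mu_equivalence : Equivalence (muRel (S := T)) :=
  ⟨mu_refl, mu_symm, mu_trans⟩

lemma mu_mull {s t : T} (h : muRel s t) (a : T) : muRel (a * s) (a * t) := by
  intro c hc
  rw [starm a s, starm a t]
  calc a * s * c * (star s * star a) = a * (s * c * star s) * star a := by
        simp only [mul_assoc]
    _ = a * (t * c * star t) * star a := by rw [h c hc]
    _ = a * t * c * (star t * star a) := by simp only [mul_assoc]

lemma mu_mulr {s t : T} (h : muRel s t) (a : T) : muRel (s * a) (t * a) := by
  intro c hc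
  rw [starm s a, starm t a]
  calc s * a * c * (star a * star s) = s * (a * c * star a) * star s := by
        simp only [mul_assoc]
    _ = t * (a * c * star a) * star t := h _ (conj_idem hc a)
    _ = t * a * c * (star a * star t) := by simp only [mul_assoc]

lemma mu_mul {a b c d : T} (h1 : muRel a b) (h2 : muRel c d) : muRel (a * c) (b * d) :=
  mu_trans (mu_mulr h1 c) (mu_mull h2 b)

lemma mu_msms {s t : T} (h : muRel s t) : s * star s = t * star t := by
  have hC : s * star s = t * (star s * s) * star t := by
    have e1 : s * (star s * s) * star s = (s * star s) * (s * star s) := by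
      simp only [mul_assoc]
    rw [← h _ (idem_sm s), e1, (idem_ms s).eq]
  have hD : s * (star t * t) * star s = t * star t := by
    have e1 : t * (star t * t) * star t = (t * star t) * (t * star t) := by
      simp only [mul_assoc]
    rw [h _ (idem_sm t), e1, (idem_ms t).eq]
  have h1 : (s * star s) * (t * star t) = t * star t := by
    calc (s * star s) * (t * star t) = (s * star s) * (s * (star t * t) * star s) := by
          rw [hD]
      _ = (s * star s * s) * ((star t * t) * star s) := by simp only [mul_assoc]
      _ = s * ((star t * t) * star s) := by rw [sss]
      _ = s * (star t * t) * star s := by simp only [mul_assoc]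
      _ = t * star t := hD
  have h2 : (t * star t) * (s * star s) = s * star s := by
    calc (t * star t) * (s * star s) = (t * star t) * (t * (star s * s) * star t) := by
          rw [← hC]
      _ = (t * star t * t) * ((star s * s) * star t) := by simp only [mul_assoc]
      _ = t * ((star s * s) * star t) := by rw [sss]
      _ = t * (star s * s) * star t := by simp only [mul_assoc]
      _ = s * star s := hC.symm
  calc s * star s = (t * star t) * (s * star s) := h2.symm
    _ = (s * star s) * (t * star t) := idem_comm (idem_ms t) (idem_ms s)
    _ = t * star t := h1

lemma mu_sandwich {X Y g h' : T} (hX : IsIdempotentElem X) (hY : IsIdempotentElem Y)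
    (hg : IsIdempotentElem g) (hh : IsIdempotentElem h')
    (h1 : X = g * Y * g) (h2 : Y = h' * X * h') (hXg : X * g = X) : X = Y := by
  have hk : IsIdempotentElem (g * h') := idem_mul hg hh
  have step : X = X * (g * h') := by
    calc X = g * Y * g := h1
      _ = g * ((h' * X * h') * g) := by rw [h2, mul_assoc]
      _ = (g * h') * X * (h' * g) := by simp only [mul_assoc]
      _ = (g * h') * X * (g * h') := by rw [idem_comm hh hg]
      _ = (X * (g * h')) * (g * h') := by rw [idem_comm hX hk]
      _ = X * ((g * h') * (g * h')) := by simp only [mul_assoc]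
      _ = X * (g * h') := by rw [hk.eq]
  have hXh : X * h' = X := by
    calc X * h' = (X * (g * h')) * h' := by rw [← step]
      _ = X * (g * (h' * h')) := by simp only [mul_assoc]
      _ = X * (g * h') := by rw [hh.eq]
      _ = X := step.symm
  calc X = X * h' := hXh.symm
    _ = h' * X := idem_comm hX hh
    _ = h' * (X * h') := by rw [hXh]
    _ = h' * X * h' := by rw [mul_assoc]
    _ = Y := h2.symm

lemma mu_star {s t : T} (h : muRel s t) : muRel (star s) (star t) := by
  intro f hf
  rw [sstar, sstar]
  have hXidem := conj_idem' hf s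
  have hYidem := conj_idem' hf t
  have hE : s * star s = t * star t := mu_msms h
  have pure1 : s * (star s * f * s) * star s = (s * star s) * f * (s * star s) := by
    simp only [mul_assoc]
  have pure2 : t * (star t * f * t) * star t = (t * star t) * f * (t * star t) := by
    simp only [mul_assoc]
  have pure3 : star s * ((s * star s) * f * (s * star s)) * s = star s * f * s := by
    calc star s * ((s * star s) * f * (s * star s)) * s
        = (star s * s * star s) * f * (s * star s * s) := by simp only [mul_assoc]
      _ = star s * f * s := by rw [s's', sss]
  have pure3' : star t * ((t * star t) * f * (t * star t)) * t = star t * f * t := by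
    calc star t * ((t * star t) * f * (t * star t)) * t
        = (star t * t * star t) * f * (t * star t * t) := by simp only [mul_assoc]
      _ = star t * f * t := by rw [s's', sss]
  have eq1 : s * (star t * f * t) * star s = (s * star s) * f * (s * star s) := by
    rw [h _ hYidem, pure2, ← hE]
  have eq2 : t * (star s * f * s) * star t = (s * star s) * f * (s * star s) := by
    rw [← h _ hXidem, pure1]
  have eq2' : t * (star s * f * s) * star t = (t * star t) * f * (t * star t) := by
    rw [eq2, hE]
  have hXgYg : star s * f * s = (star s * s) * (star t * f * t) * (star s * s) := by
    calc star s * f * s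
        = star s * ((s * star s) * f * (s * star s)) * s := pure3.symm
      _ = star s * (s * (star t * f * t) * star s) * s := by rw [← eq1]
      _ = (star s * s) * (star t * f * t) * (star s * s) := by simp only [mul_assoc]
  have hYhXh : star t * f * t = (star t * t) * (star s * f * s) * (star t * t) := by
    calc star t * f * t
        = star t * ((t * star t) * f * (t * star t)) * t := pure3'.symm
      _ = star t * (t * (star s * f * s) * star t) * t := by rw [← eq2']
      _ = (star t * t) * (star s * f * s) * (star t * t) := by simp only [mul_assoc]
  have hXg : (star s * f * s) * (star s * s) = star s * f * s := by
    calc star s * f * s * (star s * s) = star s * f * (s * star s * s) := by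
          simp only [mul_assoc]
      _ = star s * f * s := by rw [sss]
  exact mu_sandwich hXidem hYidem (idem_sm s) (idem_sm t) hXgYg hYhXh hXg

lemma mu_smsm {s t : T} (h : muRel s t) : star s * s = star t * t := by
  have := mu_msms (mu_star h)
  rwa [sstar, sstar] at this

lemma mu_idem_eq {e f : T} (he : IsIdempotentElem e) (hf : IsIdempotentElem f)
    (h : muRel e f) : e = f := by
  have h1 : e = f * e * f := by
    have := h e he
    rwa [star_of_idem he, star_of_idem hf, he.eq, he.eq] at this
  have h2 : f = e * f * e := by
    have h2' := h f hf
    rw [star_of_idem he, star_of_idem hf, hf.eq, hf.eq] at h2'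
    exact h2'.symm
  have hef : e * f = e := by
    conv_lhs => rw [h1]
    rw [mul_assoc (f * e) f f, hf.eq, ← h1]
  have hfe : f * e = f := by
    conv_lhs => rw [h2]
    rw [mul_assoc (e * f) e e, he.eq, ← h2]
  rw [← hef, idem_comm he hf, hfe]

lemma mu_lallement {s : T} (h : muRel (s * s) s) : muRel s (s * star s) := by
  set w := star (s * s) with hw
  have he'idem : IsIdempotentElem (s * w * s) := by
    show s * w * s * (s * w * s) = s * w * s
    calc s * w * s * (s * w * s) = s * (w * (s * s) * w) * s := by simp only [mul_assoc]
      _ = s * w * s := by rw [hw, s's']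
  have m1 : muRel (s * w * s) (s * w * (s * s)) := mu_mull (mu_symm h) (s * w)
  have m2 : muRel (s * (w * (s * s))) ((s * s) * (w * (s * s))) :=
    mu_mulr (mu_symm h) (w * (s * s))
  have m2' : muRel (s * w * (s * s)) (s * s) := by
    have e1 : s * w * (s * s) = s * (w * (s * s)) := by simp only [mul_assoc]
    have e2 : (s * s) * (w * (s * s)) = s * s := by rw [← mul_assoc, hw, sss]
    rw [e2] at m2
    rw [e1]
    exact m2
  have me's : muRel (s * w * s) s := mu_trans (mu_trans m1 m2') h
  have hstar : star (s * w * s) = s * w * s := star_of_idem he'idem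
  have hmul : muRel ((s * w * s) * star (s * w * s)) (s * star s) :=
    mu_mul me's (mu_star me's)
  have heq : (s * w * s) * star (s * w * s) = s * w * s := by
    rw [hstar, he'idem.eq]
  rw [heq] at hmul
  have : s * w * s = s * star s := mu_idem_eq he'idem (idem_ms s) hmul
  rw [← this]
  exact mu_symm me's

end Mu

section Mu2
variable {T : Type*} [BooleanInverseSemigroup0 T]

open BooleanInverseSemigroup0 (le_sup_left le_sup_right sup_le mul_sup sup_mul
  sdiff_idem sdiff_le sdiff_mul sdiff_sup)

lemma mul_star_eq_zero {F t : T} (h0 : F * (star t * t) = 0) : F * star t = 0 := by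
  have e1 : F * star t = F * (star t * t * star t) := by
    conv_lhs => rw [← s's' t]
  rw [e1, ← mul_assoc, ← mul_assoc, mul_assoc F (star t) t, h0,
    InverseSemigroup0.zero_mul]

lemma mul_eq_zero_of_ms {E t : T} (h0 : E * (t * star t) = 0) : E * t = 0 := by
  have e1 : E * t = E * (t * star t * t) := by
    conv_lhs => rw [← sss t]
  rw [e1, ← mul_assoc, ← mul_assoc, mul_assoc E t (star t), h0,
    InverseSemigroup0.zero_mul]

lemma skewDiff_mul_star (s t : T) : (skewDiff s t) * star t = 0 := by
  have hF0 : ((star s * s) \ (star t * t)) * star t = 0 :=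
    mul_star_eq_zero (sdiff_mul _ _ (idem_sm s) (idem_sm t))
  show ((s * star s) \ (t * star t)) * s * ((star s * s) \ (star t * t)) * star t = 0
  rw [mul_assoc, hF0, InverseSemigroup0.mul_zero]

lemma star_skewDiff (s t : T) :
    star (skewDiff s t) =
      ((star s * s) \ (star t * t)) * (star s * ((s * star s) \ (t * star t))) := by
  show star (((s * star s) \ (t * star t)) * s * ((star s * s) \ (star t * t))) = _
  rw [starm, starm, star_of_idem (sdiff_idem _ _ (idem_sm s) (idem_sm t)),
    star_of_idem (sdiff_idem _ _ (idem_ms s) (idem_ms t))]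

lemma star_skewDiff_mul (s t : T) : star (skewDiff s t) * t = 0 := by
  have hE0 : ((s * star s) \ (t * star t)) * t = 0 :=
    mul_eq_zero_of_ms (sdiff_mul _ _ (idem_ms s) (idem_ms t))
  rw [star_skewDiff, mul_assoc, mul_assoc, hE0, InverseSemigroup0.mul_zero,
    InverseSemigroup0.mul_zero]

lemma compat_skewDiff (s t : T) : Compat (skewDiff s t) t :=
  compat_of_orth (skewDiff_mul_star s t) (star_skewDiff_mul s t)

lemma compat_msts {s t : T} (h : Compat s t) : s * star t = t * star s := by
  conv_lhs => rw [← star_of_idem h.1]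
  rw [starm, sstar]

lemma compat_smst {s t : T} (h : Compat s t) : star s * t = star t * s := by
  conv_lhs => rw [← star_of_idem h.2]
  rw [starm, sstar]

lemma compat_meet {s t : T} (h : Compat s t) : (s * star t) * t = (t * star t) * s := by
  calc (s * star t) * t = (t * star s) * t := by rw [compat_msts h]
    _ = t * (star s * t) := by rw [mul_assoc]
    _ = t * (star t * s) := by rw [compat_smst h]
    _ = (t * star t) * s := by rw [← mul_assoc]

lemma sup_conj_expand {s t : T} (hcomp : Compat s t) (c : T) :
    (s ⊔ t) * c * star (s ⊔ t) =
      ((s * c * star s) ⊔ (s * c * star t)) ⊔ ((t * c * star s) ⊔ (t * c * star t)) := by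
  rw [star_sup hcomp]
  calc (s ⊔ t) * c * (star s ⊔ star t)
      = ((s * c) ⊔ (t * c)) * (star s ⊔ star t) := by rw [sup_mul c s t hcomp]
    _ = (s * c) * (star s ⊔ star t) ⊔ (t * c) * (star s ⊔ star t) :=
        sup_mul _ _ _ (compat_mulr hcomp c)
    _ = ((s * c * star s) ⊔ (s * c * star t)) ⊔ ((t * c * star s) ⊔ (t * c * star t)) := by
        rw [mul_sup (s * c) _ _ (compat_star hcomp), mul_sup (t * c) _ _ (compat_star hcomp)]

lemma conj_cross (s t : T) {c : T} (hc : IsIdempotentElem c) :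
    s * c * star t = (s * ((star t * t) * c) * star s) * (s * star t) := by
  refine Eq.symm ?_
  calc (s * ((star t * t) * c) * star s) * (s * star t)
      = s * ((star t * t) * (c * (star s * s))) * star t := by simp only [mul_assoc]
    _ = s * ((star t * t) * ((star s * s) * c)) * star t := by
        rw [idem_comm hc (idem_sm s)]
    _ = s * (((star s * s) * c) * (star t * t)) * star t := by
        rw [idem_comm (idem_sm t) (idem_mul (idem_sm s) hc)]
    _ = (s * star s * s) * (c * (star t * t * star t)) := by simp only [mul_assoc]
    _ = s * (c * star t) := by rw [sss, s's']
    _ = s * c * star t := by rw [← mul_assoc]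

lemma mu_sup {s₁ s₂ t₁ t₂ : T} (hs : muRel s₁ s₂) (ht : muRel t₁ t₂)
    (h1 : Compat s₁ t₁) (h2 : Compat s₂ t₂) : muRel (s₁ ⊔ t₁) (s₂ ⊔ t₂) := by
  intro c hc
  rw [sup_conj_expand h1 c, sup_conj_expand h2 c]
  have hst : s₁ * star t₁ = s₂ * star t₂ :=
    mu_idem_eq h1.1 h2.1 (mu_mul hs (mu_star ht))
  have hts : t₁ * star s₁ = t₂ * star s₂ :=
    mu_idem_eq (compat_symm h1).1 (compat_symm h2).1 (mu_mul ht (mu_star hs))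
  have hcross1 : s₁ * c * star t₁ = s₂ * c * star t₂ := by
    rw [conj_cross s₁ t₁ hc, conj_cross s₂ t₂ hc, mu_smsm ht, hst]
    exact congrArg (fun y => y * (s₂ * star t₂)) (hs _ (idem_mul (idem_sm t₂) hc))
  have hcross2 : t₁ * c * star s₁ = t₂ * c * star s₂ := by
    rw [conj_cross t₁ s₁ hc, conj_cross t₂ s₂ hc, mu_smsm hs, hts]
    exact congrArg (fun y => y * (t₂ * star s₂)) (ht _ (idem_mul (idem_sm s₂) hc))
  rw [hs c hc, ht c hc, hcross1, hcross2]

lemma mu_skewDiff {s₁ s₂ t₁ t₂ : T} (hs : muRel s₁ s₂) (ht : muRel t₁ t₂) :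
    muRel (skewDiff s₁ t₁) (skewDiff s₂ t₂) := by
  unfold skewDiff
  rw [mu_msms hs, mu_msms ht, mu_smsm hs, mu_smsm ht]
  exact mu_mulr (mu_mull hs _) _

lemma mu_skewAdd {s₁ s₂ t₁ t₂ : T} (hs : muRel s₁ s₂) (ht : muRel t₁ t₂) :
    muRel (skewAdd s₁ t₁) (skewAdd s₂ t₂) := by
  show muRel (skewDiff s₁ t₁ ⊔ t₁) (skewDiff s₂ t₂ ⊔ t₂)
  exact mu_sup (mu_skewDiff hs ht) ht (compat_skewDiff _ _) (compat_skewDiff _ _)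

lemma skewDiff_natle (s t : T) : NatLe (skewDiff s t) s :=
  natle_trans (mul_idem_natle _ (sdiff_idem _ _ (idem_sm s) (idem_sm t)))
    (idem_mul_natle _ (sdiff_idem _ _ (idem_ms s) (idem_ms t)))

lemma skewAdd_eq_sup {s t : T} (h : Compat s t) : skewAdd s t = s ⊔ t := by
  have hcs := compat_skewDiff s t
  have hF := sdiff_idem _ _ (idem_sm s) (idem_sm t)
  have hE := sdiff_idem _ _ (idem_ms s) (idem_ms t)
  refine natle_antisymm ?_ ?_
  · exact sup_le _ _ _ hcs (natle_trans (skewDiff_natle s t) (le_sup_left s t h))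
      (le_sup_right s t h)
  · refine sup_le s t _ h ?_ (le_sup_right _ _ hcs)
    have h1 : s * (star s * s) = s := by rw [← mul_assoc, sss]
    have hdec : s = (s * ((star s * s) \ (star t * t))) ⊔ (s * (star t * t)) := by
      calc s = s * (star s * s) := h1.symm
        _ = s * (((star s * s) \ (star t * t)) ⊔ ((star s * s) * (star t * t))) := by
            rw [sdiff_sup _ _ (idem_sm s) (idem_sm t)]
        _ = (s * ((star s * s) \ (star t * t))) ⊔ (s * ((star s * s) * (star t * t))) :=
            mul_sup s _ _ (idem_compat hF (idem_mul (idem_sm s) (idem_sm t)))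
        _ = (s * ((star s * s) \ (star t * t))) ⊔ (s * (star t * t)) := by
            rw [← mul_assoc s (star s * s) (star t * t), h1]
    have htts : (t * star t) * s = s * (star t * t) := by
      rw [← compat_meet h, mul_assoc]
    have hz0 : (t * star t) * (s * ((star s * s) \ (star t * t))) = 0 := by
      rw [← mul_assoc, htts, mul_assoc, ← idem_comm hF (idem_sm t),
        sdiff_mul _ _ (idem_sm s) (idem_sm t), InverseSemigroup0.mul_zero]
    have hsF : s * ((star s * s) \ (star t * t)) = skewDiff s t := by
      have key : (s * star s) * (s * ((star s * s) \ (star t * t)))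
          = s * ((star s * s) \ (star t * t)) := by
        rw [← mul_assoc, sss]
      calc s * ((star s * s) \ (star t * t))
          = (s * star s) * (s * ((star s * s) \ (star t * t))) := key.symm
        _ = (((s * star s) \ (t * star t)) ⊔ ((s * star s) * (t * star t))) *
              (s * ((star s * s) \ (star t * t))) := by
            rw [sdiff_sup _ _ (idem_ms s) (idem_ms t)]
        _ = (((s * star s) \ (t * star t)) * (s * ((star s * s) \ (star t * t)))) ⊔
              (((s * star s) * (t * star t)) * (s * ((star s * s) \ (star t * t)))) :=
            sup_mul _ _ _ (idem_compat hE (idem_mul (idem_ms s) (idem_ms t)))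
        _ = (((s * star s) \ (t * star t)) * (s * ((star s * s) \ (star t * t)))) ⊔ 0 := by
            rw [mul_assoc (s * star s) (t * star t) _, hz0, InverseSemigroup0.mul_zero]
        _ = ((s * star s) \ (t * star t)) * (s * ((star s * s) \ (star t * t))) :=
            sup_zero _
        _ = skewDiff s t := by
            show _ = ((s * star s) \ (t * star t)) * s * ((star s * s) \ (star t * t))
            rw [mul_assoc]
    have hm_le : NatLe (s * (star t * t)) t := by
      rw [← mul_assoc]
      exact idem_mul_natle t h.1
    have hmono := sup_mono (natle_refl (skewDiff s t)) hm_le hcs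
    rw [hsF] at hdec
    show NatLe s (skewDiff s t ⊔ t)
    nth_rewrite 1 [hdec]
    exact hmono

end Mu2

section Reps
variable {T : Type*} [BooleanInverseSemigroup0 T]

open BooleanInverseSemigroup0 (le_sup_left le_sup_right sup_le mul_sup sup_mul
  sdiff_idem sdiff_le sdiff_mul sdiff_sup)

lemma mu_a_e {s t : T} (hA : muRel ((s * star t) * (s * star t)) (s * star t)) :
    muRel (s * star t) (s * (star t * t) * star s) := by
  have h0 := mu_lallement hA
  have heq : (s * star t) * star (s * star t) = s * (star t * t) * star s := by
    rw [starm, sstar]; simp only [mul_assoc]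
  rw [heq] at h0
  exact h0

lemma mu_i {s t : T} (hA : muRel ((s * star t) * (s * star t)) (s * star t)) :
    t * (star s * s) * star t = s * (star t * t) * star s := by
  have he : IsIdempotentElem (s * (star t * t) * star s) := conj_idem (idem_sm t) s
  have hae := mu_a_e hA
  have ha' : muRel (star (s * star t)) (s * (star t * t) * star s) := by
    have h1 := mu_star hae
    rwa [star_of_idem he] at h1
  have hprod := mu_mul ha' hae
  rw [he.eq] at hprod
  have hexp : (star (s * star t)) * (s * star t) = t * (star s * s) * star t := by
    rw [starm, sstar]; simp only [mul_assoc]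
  rw [hexp] at hprod
  exact mu_idem_eq (conj_idem (idem_sm s) t) he hprod

lemma mu_ii {s t : T} (hB : muRel ((star s * t) * (star s * t)) (star s * t)) :
    star t * (s * star s) * t = star s * (t * star t) * s := by
  have h := mu_i (s := star s) (t := star t) (by rw [sstar]; exact hB)
  rwa [sstar, sstar] at h

lemma mu_iii {s t : T} (hA : muRel ((s * star t) * (s * star t)) (s * star t))
    (hB : muRel ((star s * t) * (star s * t)) (star s * t)) :
    (s * star s) * (t * star t) = s * (star t * t) * star s := by
  have he : IsIdempotentElem (s * (star t * t) * star s) := conj_idem (idem_sm t) s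
  have hae := mu_a_e hA
  have step_a : s * (star s * (t * star t) * s) * star s = (s * star s) * (t * star t) := by
    have p1 : s * (star s * (t * star t) * s) * star s
        = ((s * star s) * (t * star t)) * (s * star s) := by simp only [mul_assoc]
    rw [p1, mul_assoc (s * star s) (t * star t) (s * star s),
      idem_comm (idem_ms t) (idem_ms s),
      ← mul_assoc (s * star s) (s * star s) (t * star t), (idem_ms s).eq]
  have step_b : s * (star s * (t * star t) * s) * star s = s * (star t * t) * star s := by
    have hii := mu_ii hB
    rw [← hii]
    have q1 : s * (star t * (s * star s) * t) * star s
        = (s * star t) * (s * star s) * star (s * star t) := by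
      rw [starm, sstar]; simp only [mul_assoc]
    rw [q1, hae _ (idem_ms s), star_of_idem he]
    -- goal: e * (s*star s) * e = e  with e = s * (star t * t) * star s
    have he_ss : (s * (star t * t) * star s) * (s * star s) = s * (star t * t) * star s := by
      calc (s * (star t * t) * star s) * (s * star s)
          = s * (star t * t) * (star s * s * star s) := by simp only [mul_assoc]
        _ = s * (star t * t) * star s := by rw [s's']
    rw [he_ss, he.eq]
  rw [← step_a, step_b]

lemma compat_s_sd (s t : T) : Compat s (skewDiff t s) := by
  refine compat_of_orth ?_ ?_
  · have h0 : (skewDiff t s) * star s = 0 := skewDiff_mul_star t s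
    calc s * star (skewDiff t s) = star ((skewDiff t s) * star s) := by rw [starm, sstar]
      _ = 0 := by rw [h0, szero]
  · have h0 : star (skewDiff t s) * s = 0 := star_skewDiff_mul t s
    calc star s * (skewDiff t s) = star (star (skewDiff t s) * s) := by rw [starm, sstar]
      _ = 0 := by rw [h0, szero]

lemma compat_s_m2 (s t : T) : Compat s (s * (star t * t)) := by
  constructor
  · have e1 : s * star (s * (star t * t)) = s * (star t * t) * star s := by
      rw [starm, star_of_idem (idem_sm t)]; simp only [mul_assoc]
    rw [e1]; exact conj_idem (idem_sm t) s
  · have e1 : star s * (s * (star t * t)) = (star s * s) * (star t * t) := by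
      simp only [mul_assoc]
    rw [e1]; exact idem_mul (idem_sm s) (idem_sm t)

lemma compat_sd_m2 (s t : T) : Compat (skewDiff t s) (s * (star t * t)) := by
  have hF' : IsIdempotentElem ((star t * t) \ (star s * s)) :=
    sdiff_idem _ _ (idem_sm t) (idem_sm s)
  have hF'tt : ((star t * t) \ (star s * s)) * (star t * t) = (star t * t) \ (star s * s) :=
    natle_idem_mul hF' (idem_sm t) (sdiff_le _ _ (idem_sm t) (idem_sm s))
  refine compat_of_orth ?_ ?_
  · have e1 : (skewDiff t s) * star (s * (star t * t)) =
        ((t * star t) \ (s * star s)) * t *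
          ((((star t * t) \ (star s * s)) * (star t * t)) * star s) := by
      rw [starm, star_of_idem (idem_sm t)]
      show (((t * star t) \ (s * star s)) * t * ((star t * t) \ (star s * s))) *
        ((star t * t) * star s) = _
      simp only [mul_assoc]
    rw [e1, hF'tt, ← mul_assoc]
    exact skewDiff_mul_star t s
  · have hE's : ((t * star t) \ (s * star s)) * s = 0 :=
      mul_eq_zero_of_ms (sdiff_mul _ _ (idem_ms t) (idem_ms s))
    rw [star_skewDiff]
    have e1 : (((star t * t) \ (star s * s)) * (star t * ((t * star t) \ (s * star s)))) *
        (s * (star t * t)) =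
        ((star t * t) \ (star s * s)) *
          (star t * ((((t * star t) \ (s * star s)) * s) * (star t * t))) := by
      simp only [mul_assoc]
    rw [e1, hE's, InverseSemigroup0.zero_mul, InverseSemigroup0.mul_zero,
      InverseSemigroup0.mul_zero]

lemma compat_reps (s t : T) : Compat s (skewDiff t s ⊔ s * (star t * t)) :=
  compat_sup (compat_sd_m2 s t) (compat_s_sd s t) (compat_s_m2 s t)

lemma mu_reps {s t : T} (hA : muRel ((s * star t) * (s * star t)) (s * star t))
    (hB : muRel ((star s * t) * (star s * t)) (star s * t)) :
    muRel (skewDiff t s ⊔ s * (star t * t)) t := by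
  have he : IsIdempotentElem (s * (star t * t) * star s) := conj_idem (idem_sm t) s
  have hE' : IsIdempotentElem ((t * star t) \ (s * star s)) :=
    sdiff_idem _ _ (idem_ms t) (idem_ms s)
  have hF' : IsIdempotentElem ((star t * t) \ (star s * s)) :=
    sdiff_idem _ _ (idem_sm t) (idem_sm s)
  have hF'tt : ((star t * t) \ (star s * s)) * (star t * t) = (star t * t) \ (star s * s) :=
    natle_idem_mul hF' (idem_sm t) (sdiff_le _ _ (idem_sm t) (idem_sm s))
  have hiii := mu_iii hA hB
  have hae := mu_a_e hA
  intro c hc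
  have hY : IsIdempotentElem (t * c * star t) := conj_idem hc t
  have hFc : (((star t * t) \ (star s * s)) * c) * star s = 0 := by
    refine mul_star_eq_zero ?_
    rw [mul_assoc, idem_comm hc (idem_sm s), ← mul_assoc,
      sdiff_mul _ _ (idem_sm t) (idem_sm s), InverseSemigroup0.zero_mul]
  have hFcF : ((star t * t) \ (star s * s)) * c * ((star t * t) \ (star s * s))
      = ((star t * t) \ (star s * s)) * c := by
    rw [mul_assoc, idem_comm hc hF', ← mul_assoc, hF'.eq]
  have hFctt : (((star t * t) \ (star s * s)) * c) * (star t * t)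
      = ((star t * t) \ (star s * s)) * c := by
    rw [mul_assoc, idem_comm hc (idem_sm t), ← mul_assoc, hF'tt]
  -- cross term 1
  have c1 : (skewDiff t s) * c * star (s * (star t * t)) = 0 := by
    have e1 : (skewDiff t s) * c * star (s * (star t * t)) =
        (((t * star t) \ (s * star s)) * t) *
          (((((star t * t) \ (star s * s)) * c) * (star t * t)) * star s) := by
      rw [starm, star_of_idem (idem_sm t)]
      show (((t * star t) \ (s * star s)) * t * ((star t * t) \ (star s * s))) * c *
        ((star t * t) * star s) = _
      simp only [mul_assoc]
    rw [e1, hFctt, hFc, InverseSemigroup0.mul_zero]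
  -- cross term 2
  have c2 : (s * (star t * t)) * c * star (skewDiff t s) = 0 := by
    have e1 : star ((skewDiff t s) * c * star (s * (star t * t))) =
        (s * (star t * t)) * c * star (skewDiff t s) := by
      rw [starm (skewDiff t s * c) (star (s * (star t * t))), sstar,
        starm (skewDiff t s) c, star_of_idem hc, ← mul_assoc]
    rw [← e1, c1, szero]
  -- main term 1
  have main1 : (skewDiff t s) * c * star (skewDiff t s) =
      ((t * star t) \ (s * star s)) * (t * c * star t) := by
    have e1 : (skewDiff t s) * c * star (skewDiff t s) =
        ((t * star t) \ (s * star s)) *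
          (t * (((star t * t) \ (star s * s)) * c * ((star t * t) \ (star s * s))) * star t) *
          ((t * star t) \ (s * star s)) := by
      rw [star_skewDiff]
      show (((t * star t) \ (s * star s)) * t * ((star t * t) \ (star s * s))) * c *
        (((star t * t) \ (star s * s)) * (star t * ((t * star t) \ (s * star s)))) = _
      simp only [mul_assoc]
    have hW : t * ((star t * t) \ (star s * s)) * star t = (t * star t) \
        (s * (star t * t) * star s) := by
      rw [conj_sdiff t (idem_sm s), mu_i hA]
    have hWY : (t * ((star t * t) \ (star s * s)) * star t) * (t * c * star t)
        = t * (((star t * t) \ (star s * s)) * c) * star t := by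
      calc (t * ((star t * t) \ (star s * s)) * star t) * (t * c * star t)
          = t * ((((star t * t) \ (star s * s)) * (star t * t)) * c) * star t := by
            simp only [mul_assoc]
        _ = t * (((star t * t) \ (star s * s)) * c) * star t := by rw [hF'tt]
    have hE'e : ((t * star t) \ (s * star s)) * (s * (star t * t) * star s) = 0 := by
      rw [← hiii, ← mul_assoc, sdiff_mul _ _ (idem_ms t) (idem_ms s),
        InverseSemigroup0.zero_mul]
    have hE'W : ((t * star t) \ (s * star s)) * ((t * star t) \ (s * (star t * t) * star s))
        = (t * star t) \ (s * star s) :=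
      idem_mul_sdiff_eq hE' (idem_ms t) he (sdiff_le _ _ (idem_ms t) (idem_ms s)) hE'e
    calc (skewDiff t s) * c * star (skewDiff t s)
        = ((t * star t) \ (s * star s)) *
            (t * (((star t * t) \ (star s * s)) * c * ((star t * t) \ (star s * s))) * star t) *
            ((t * star t) \ (s * star s)) := e1
      _ = ((t * star t) \ (s * star s)) *
            (t * (((star t * t) \ (star s * s)) * c) * star t) *
            ((t * star t) \ (s * star s)) := by rw [hFcF]
      _ = ((t * star t) \ (s * star s)) *
            ((t * ((star t * t) \ (star s * s)) * star t) * (t * c * star t)) *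
            ((t * star t) \ (s * star s)) := by rw [hWY]
      _ = (((t * star t) \ (s * star s)) * ((t * star t) \ (s * (star t * t) * star s))) *
            ((t * c * star t) * ((t * star t) \ (s * star s))) := by
          rw [hW]; simp only [mul_assoc]
      _ = ((t * star t) \ (s * star s)) *
            ((t * c * star t) * ((t * star t) \ (s * star s))) := by rw [hE'W]
      _ = ((t * star t) \ (s * star s)) *
            (((t * star t) \ (s * star s)) * (t * c * star t)) := by
          rw [idem_comm hY hE']
      _ = (((t * star t) \ (s * star s)) * ((t * star t) \ (s * star s))) *
            (t * c * star t) := by rw [← mul_assoc]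
      _ = ((t * star t) \ (s * star s)) * (t * c * star t) := by rw [hE'.eq]
  -- main term 2
  have main2 : (s * (star t * t)) * c * star (s * (star t * t)) =
      (s * (star t * t) * star s) * (t * c * star t) := by
    have p1 : (s * (star t * t)) * c * star (s * (star t * t)) =
        (s * star t) * (t * c * star t) * star (s * star t) := by
      rw [starm s (star t * t), star_of_idem (idem_sm t), starm s (star t), sstar]
      simp only [mul_assoc]
    rw [p1, hae _ hY, star_of_idem he]
    exact idem_sandwich he hY
  -- assemble
  rw [sup_conj_expand (compat_sd_m2 s t) c, main1, c1, c2, main2, sup_zero, zero_sup]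
  rw [← sup_mul (t * c * star t) _ _ (idem_compat hE' he)]
  have hEe : ((t * star t) \ (s * star s)) ⊔ (s * (star t * t) * star s) = t * star t := by
    rw [← hiii, idem_comm (idem_ms s) (idem_ms t)]
    exact sdiff_sup _ _ (idem_ms t) (idem_ms s)
  rw [hEe]
  calc (t * star t) * (t * c * star t) = (t * star t * t) * (c * star t) := by
        simp only [mul_assoc]
    _ = t * (c * star t) := by rw [sss]
    _ = t * c * star t := by rw [← mul_assoc]

end Reps

section QuotCons
variable {T : Type*} [BooleanInverseSemigroup0 T]

open BooleanInverseSemigroup0 (le_sup_left le_sup_right sup_le mul_sup sup_mul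
  sdiff_idem sdiff_le sdiff_mul sdiff_sup)

lemma mk_eq_mk {a b : T} :
    Quot.mk (muRel (S := T)) a = Quot.mk (muRel (S := T)) b ↔ muRel a b :=
  (Quot.eq).trans (mu_equivalence.eqvGen_iff)

def qmul : Quot (muRel (S := T)) → Quot (muRel (S := T)) → Quot (muRel (S := T)) :=
  Quot.map₂ (· * ·) (fun a _ _ h => mu_mull h a)
    (fun _ _ b h => mu_mulr h b)

def qstar : Quot (muRel (S := T)) → Quot (muRel (S := T)) :=
  Quot.map star (fun _ _ h => mu_star h)

def qzero : Quot (muRel (S := T)) := Quot.mk _ 0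

def qsup : Quot (muRel (S := T)) → Quot (muRel (S := T)) → Quot (muRel (S := T)) :=
  Quot.map₂ skewAdd (fun a _ _ h => mu_skewAdd (mu_refl a) h)
    (fun _ _ b h => mu_skewAdd h (mu_refl b))

def qsdiff : Quot (muRel (S := T)) → Quot (muRel (S := T)) → Quot (muRel (S := T)) :=
  Quot.map₂ (fun a b => (a * star a) \ (b * star b))
    (fun a b₁ b₂ h => by
      show muRel ((a * star a) \ (b₁ * star b₁)) ((a * star a) \ (b₂ * star b₂))
      rw [mu_msms h]; exact mu_refl _)
    (fun a₁ a₂ b h => by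
      show muRel ((a₁ * star a₁) \ (b * star b)) ((a₂ * star a₂) \ (b * star b))
      rw [mu_msms h]; exact mu_refl _)

@[simp] lemma qmul_mk (a b : T) :
    qmul (Quot.mk _ a) (Quot.mk _ b) = Quot.mk (muRel (S := T)) (a * b) := rfl
@[simp] lemma qstar_mk (a : T) : qstar (Quot.mk _ a) = Quot.mk (muRel (S := T)) (star a) := rfl
@[simp] lemma qsup_mk (a b : T) :
    qsup (Quot.mk _ a) (Quot.mk _ b) = Quot.mk (muRel (S := T)) (skewAdd a b) := rfl
@[simp] lemma qsdiff_mk (a b : T) :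
    qsdiff (Quot.mk _ a) (Quot.mk _ b) =
      Quot.mk (muRel (S := T)) ((a * star a) \ (b * star b)) := rfl

lemma mu_comm_of_sq {a b : T} (ha : muRel (a * a) a) (hb : muRel (b * b) b) :
    muRel (a * b) (b * a) := by
  have ha' := mu_lallement ha
  have hb' := mu_lallement hb
  have h1 : muRel (a * b) ((a * star a) * (b * star b)) := mu_mul ha' hb'
  have h2 : muRel (b * a) ((b * star b) * (a * star a)) := mu_mul hb' ha'
  rw [idem_comm (idem_ms b) (idem_ms a)] at h2
  exact mu_trans h1 (mu_symm h2)

lemma mu_star_unique {s u : T} (h1 : muRel (s * u * s) s) (h2 : muRel (u * s * u) u) :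
    muRel u (star s) := by
  have hsq_su : muRel ((s * u) * (s * u)) (s * u) := by
    have h := mu_mulr h1 u
    have e : (s * u) * (s * u) = (s * u * s) * u := by simp only [mul_assoc]
    rw [e]; exact h
  have hsq_us : muRel ((u * s) * (u * s)) (u * s) := by
    have h := mu_mulr h2 s
    have e : (u * s) * (u * s) = (u * s * u) * s := by simp only [mul_assoc]
    rw [e]; exact h
  have hzs : muRel ((star s * s) * (star s * s)) (star s * s) := by
    rw [(idem_sm s).eq]; exact mu_refl _
  have hsz : muRel ((s * star s) * (s * star s)) (s * star s) := by
    rw [(idem_ms s).eq]; exact mu_refl _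
  have R1 : muRel u ((star s * s) * u) := by
    have e1 : u * s * u = ((u * s) * (star s * s)) * u := by
      conv_lhs => rw [← sss s]
      simp only [mul_assoc]
    have A1 : muRel u (((u * s) * (star s * s)) * u) := by
      rw [← e1]; exact mu_symm h2
    have A3 : muRel (((u * s) * (star s * s)) * u) (((star s * s) * (u * s)) * u) :=
      mu_mulr (mu_comm_of_sq hsq_us hzs) u
    have A4 : muRel (((star s * s) * (u * s)) * u) ((star s * s) * u) := by
      have e2 : ((star s * s) * (u * s)) * u = star s * ((s * u * s) * u) := by
        simp only [mul_assoc]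
      have e3 : (star s * s) * u = star s * (s * u) := by simp only [mul_assoc]
      rw [e2, e3]
      exact mu_mull (mu_mulr h1 u) (star s)
    exact mu_trans (mu_trans A1 A3) A4
  have R2 : muRel u (u * (s * star s)) := by
    have e1 : u * s * u = u * ((s * star s) * (s * u)) := by
      conv_lhs => rw [← sss s]
      simp only [mul_assoc]
    have B1 : muRel u (u * ((s * star s) * (s * u))) := by
      rw [← e1]; exact mu_symm h2
    have B3 : muRel (u * ((s * star s) * (s * u))) (u * ((s * u) * (s * star s))) :=
      mu_mull (mu_comm_of_sq hsz hsq_su) u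
    have e2 : u * ((s * u) * (s * star s)) = (u * s * u) * (s * star s) := by
      simp only [mul_assoc]
    have B4 : muRel ((u * s * u) * (s * star s)) (u * (s * star s)) :=
      mu_mulr h2 (s * star s)
    rw [e2] at B3
    exact mu_trans (mu_trans B1 B3) B4
  have C1 : muRel ((star s * s) * u) ((star s * s) * (u * (s * star s))) :=
    mu_mull R2 (star s * s)
  have e3 : (star s * s) * (u * (s * star s)) = star s * ((s * u * s) * star s) := by
    simp only [mul_assoc]
  have C2 : muRel (star s * ((s * u * s) * star s)) (star s * (s * star s)) :=
    mu_mull (mu_mulr h1 (star s)) (star s)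
  have e4 : star s * (s * star s) = star s := by rw [← mul_assoc, s's']
  rw [e3] at C1
  rw [e4] at C2
  exact mu_trans R1 (mu_trans C1 C2)

def qIS : InverseSemigroup0 (Quot (muRel (S := T))) where
  mul := qmul
  mul_assoc := by
    intro x y z
    induction x using Quot.ind; rename_i a
    induction y using Quot.ind; rename_i b
    induction z using Quot.ind; rename_i c
    exact congrArg (Quot.mk _) (mul_assoc a b c)
  zero := qzero
  star := qstar
  zero_mul := by
    intro x
    induction x using Quot.ind; rename_i a
    exact congrArg (Quot.mk _) (InverseSemigroup0.zero_mul a)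
  mul_zero := by
    intro x
    induction x using Quot.ind; rename_i a
    exact congrArg (Quot.mk _) (InverseSemigroup0.mul_zero a)
  mul_star_mul_self := by
    intro x
    induction x using Quot.ind; rename_i a
    exact congrArg (Quot.mk _) (sss a)
  star_mul_self_star := by
    intro x
    induction x using Quot.ind; rename_i a
    exact congrArg (Quot.mk _) (s's' a)
  star_unique := by
    intro x y hxyx hyxy
    induction x using Quot.ind; rename_i s
    induction y using Quot.ind; rename_i u
    refine (mk_eq_mk).2 (mu_star_unique ?_ ?_)
    · exact (mk_eq_mk (a := s * u * s) (b := s)).1 hxyx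
    · exact (mk_eq_mk (a := u * s * u) (b := u)).1 hyxy

end QuotCons

section QuotBIS
variable {T : Type*} [BooleanInverseSemigroup0 T]

open BooleanInverseSemigroup0 (le_sup_left le_sup_right sup_le mul_sup sup_mul
  sdiff_idem sdiff_le sdiff_mul sdiff_sup)

lemma reps_le_sup_left {s u : T}
    (hA : muRel ((s * star u) * (s * star u)) (s * star u))
    (hB : muRel ((star s * u) * (star s * u)) (star s * u)) :
    muRel s (skewAdd s u * star s * s) := by
  have hrep : muRel (skewDiff u s ⊔ s * (star u * u)) u := mu_reps hA hB
  have hcomp : Compat s (skewDiff u s ⊔ s * (star u * u)) := compat_reps s u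
  have k1 : muRel (skewAdd s (skewDiff u s ⊔ s * (star u * u))) (skewAdd s u) :=
    mu_skewAdd (mu_refl s) hrep
  have k2 : skewAdd s (skewDiff u s ⊔ s * (star u * u)) =
      s ⊔ (skewDiff u s ⊔ s * (star u * u)) := skewAdd_eq_sup hcomp
  have k3 : s = (s ⊔ (skewDiff u s ⊔ s * (star u * u))) * star s * s :=
    le_sup_left s _ hcomp
  have k4 : muRel ((skewAdd s (skewDiff u s ⊔ s * (star u * u))) * star s * s)
      (skewAdd s u * star s * s) := mu_mulr (mu_mulr k1 (star s)) s
  rw [k2, ← k3] at k4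
  exact k4

lemma reps_le_sup_right {s u : T}
    (hA : muRel ((s * star u) * (s * star u)) (s * star u))
    (hB : muRel ((star s * u) * (star s * u)) (star s * u)) :
    muRel u (skewAdd s u * star u * u) := by
  have hrep : muRel (skewDiff u s ⊔ s * (star u * u)) u := mu_reps hA hB
  have hcomp : Compat s (skewDiff u s ⊔ s * (star u * u)) := compat_reps s u
  have k1 : muRel (skewAdd s (skewDiff u s ⊔ s * (star u * u))) (skewAdd s u) :=
    mu_skewAdd (mu_refl s) hrep
  have k2 : skewAdd s (skewDiff u s ⊔ s * (star u * u)) =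
      s ⊔ (skewDiff u s ⊔ s * (star u * u)) := skewAdd_eq_sup hcomp
  have h5 : star (skewDiff u s ⊔ s * (star u * u)) * (skewDiff u s ⊔ s * (star u * u))
      = star u * u := mu_smsm hrep
  have k3 : (skewDiff u s ⊔ s * (star u * u)) =
      (s ⊔ (skewDiff u s ⊔ s * (star u * u))) *
        star (skewDiff u s ⊔ s * (star u * u)) * (skewDiff u s ⊔ s * (star u * u)) :=
    le_sup_right s _ hcomp
  have k4 : muRel ((skewAdd s (skewDiff u s ⊔ s * (star u * u))) * star u * u)
      (skewAdd s u * star u * u) := mu_mulr (mu_mulr k1 (star u)) u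
  have e : (skewAdd s (skewDiff u s ⊔ s * (star u * u))) * star u * u
      = skewDiff u s ⊔ s * (star u * u) := by
    rw [k2]
    calc (s ⊔ (skewDiff u s ⊔ s * (star u * u))) * star u * u
        = (s ⊔ (skewDiff u s ⊔ s * (star u * u))) * (star u * u) :=
          mul_assoc _ _ _
      _ = (s ⊔ (skewDiff u s ⊔ s * (star u * u))) *
            (star (skewDiff u s ⊔ s * (star u * u)) * (skewDiff u s ⊔ s * (star u * u))) := by
          rw [h5]
      _ = (s ⊔ (skewDiff u s ⊔ s * (star u * u))) *
            star (skewDiff u s ⊔ s * (star u * u)) * (skewDiff u s ⊔ s * (star u * u)) :=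
          (mul_assoc _ _ _).symm
      _ = skewDiff u s ⊔ s * (star u * u) := k3.symm
  rw [e] at k4
  exact mu_trans (mu_symm hrep) k4

lemma reps_sup_le {s u w : T}
    (hA : muRel ((s * star u) * (s * star u)) (s * star u))
    (hB : muRel ((star s * u) * (star s * u)) (star s * u))
    (h1 : muRel s (w * star s * s)) (h2 : muRel u (w * star u * u)) :
    muRel (skewAdd s u) (w * star (skewAdd s u) * (skewAdd s u)) := by
  have hs0 : NatLe (w * star s * s) w := by
    rw [mul_assoc]; exact mul_idem_natle w (idem_sm s)
  have ht0 : NatLe (w * star u * u) w := by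
    rw [mul_assoc]; exact mul_idem_natle w (idem_sm u)
  have hc : Compat (w * star s * s) (w * star u * u) := compat_mono hs0 ht0 (compat_refl w)
  have m : muRel (skewAdd s u) ((w * star s * s) ⊔ (w * star u * u)) := by
    have h := mu_skewAdd h1 h2
    rwa [skewAdd_eq_sup hc] at h
  have hle : ((w * star s * s) ⊔ (w * star u * u)) =
      w * star ((w * star s * s) ⊔ (w * star u * u)) *
        ((w * star s * s) ⊔ (w * star u * u)) := sup_le _ _ w hc hs0 ht0
  have k : muRel (w * star (skewAdd s u) * (skewAdd s u))
      (w * star ((w * star s * s) ⊔ (w * star u * u)) *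
        ((w * star s * s) ⊔ (w * star u * u))) := mu_mul (mu_mull (mu_star m) w) m
  rw [← hle] at k
  exact mu_trans m (mu_symm k)

lemma reps_mul_sup {s u : T} (d : T)
    (hA : muRel ((s * star u) * (s * star u)) (s * star u))
    (hB : muRel ((star s * u) * (star s * u)) (star s * u)) :
    muRel (d * skewAdd s u) (skewAdd (d * s) (d * u)) := by
  have hrep : muRel (skewDiff u s ⊔ s * (star u * u)) u := mu_reps hA hB
  have hcomp : Compat s (skewDiff u s ⊔ s * (star u * u)) := compat_reps s u
  have k1 : muRel (d * skewAdd s u) (d * skewAdd s (skewDiff u s ⊔ s * (star u * u))) :=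
    mu_mull (mu_skewAdd (mu_refl s) (mu_symm hrep)) d
  have k2 : d * skewAdd s (skewDiff u s ⊔ s * (star u * u)) =
      skewAdd (d * s) (d * (skewDiff u s ⊔ s * (star u * u))) := by
    rw [skewAdd_eq_sup hcomp, mul_sup d _ _ hcomp, skewAdd_eq_sup (compat_mull hcomp d)]
  have k3 : muRel (skewAdd (d * s) (d * (skewDiff u s ⊔ s * (star u * u))))
      (skewAdd (d * s) (d * u)) := mu_skewAdd (mu_refl (d * s)) (mu_mull hrep d)
  rw [k2] at k1
  exact mu_trans k1 k3

lemma reps_sup_mul {s u : T} (d : T)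
    (hA : muRel ((s * star u) * (s * star u)) (s * star u))
    (hB : muRel ((star s * u) * (star s * u)) (star s * u)) :
    muRel (skewAdd s u * d) (skewAdd (s * d) (u * d)) := by
  have hrep : muRel (skewDiff u s ⊔ s * (star u * u)) u := mu_reps hA hB
  have hcomp : Compat s (skewDiff u s ⊔ s * (star u * u)) := compat_reps s u
  have k1 : muRel (skewAdd s u * d) (skewAdd s (skewDiff u s ⊔ s * (star u * u)) * d) :=
    mu_mulr (mu_skewAdd (mu_refl s) (mu_symm hrep)) d
  have k2 : skewAdd s (skewDiff u s ⊔ s * (star u * u)) * d =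
      skewAdd (s * d) ((skewDiff u s ⊔ s * (star u * u)) * d) := by
    rw [skewAdd_eq_sup hcomp, sup_mul d _ _ hcomp, skewAdd_eq_sup (compat_mulr hcomp d)]
  have k3 : muRel (skewAdd (s * d) ((skewDiff u s ⊔ s * (star u * u)) * d))
      (skewAdd (s * d) (u * d)) := mu_skewAdd (mu_refl (s * d)) (mu_mulr hrep d)
  rw [k2] at k1
  exact mu_trans k1 k3

lemma reps_sdiff_le {s u : T} (hs : muRel (s * s) s) :
    muRel ((s * star s) \ (u * star u))
      (s * star ((s * star s) \ (u * star u)) * ((s * star s) \ (u * star u))) := by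
  have hsp := mu_lallement hs
  have hreal : (s * star s) \ (u * star u) =
      (s * star s) * star ((s * star s) \ (u * star u)) * ((s * star s) \ (u * star u)) :=
    sdiff_le _ _ (idem_ms s) (idem_ms u)
  have k : muRel ((s * star s) * star ((s * star s) \ (u * star u)) *
      ((s * star s) \ (u * star u)))
      (s * star ((s * star s) \ (u * star u)) * ((s * star s) \ (u * star u))) :=
    mu_mulr (mu_mulr (mu_symm hsp) _) _
  rw [← hreal] at k
  exact k

lemma reps_sdiff_mul {s u : T} (hu : muRel (u * u) u) :
    muRel (((s * star s) \ (u * star u)) * u) 0 := by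
  have hup := mu_lallement hu
  have k := mu_mull hup ((s * star s) \ (u * star u))
  rw [sdiff_mul _ _ (idem_ms s) (idem_ms u)] at k
  exact k

lemma reps_sdiff_sup {s u : T} (hs : muRel (s * s) s) (hu : muRel (u * u) u) :
    muRel (skewAdd ((s * star s) \ (u * star u)) (s * u)) s := by
  have hsp := mu_lallement hs
  have hup := mu_lallement hu
  have hD := sdiff_idem _ _ (idem_ms s) (idem_ms u)
  have hpq := idem_mul (idem_ms s) (idem_ms u)
  have k1 : muRel (skewAdd ((s * star s) \ (u * star u)) (s * u))
      (skewAdd ((s * star s) \ (u * star u)) ((s * star s) * (u * star u))) :=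
    mu_skewAdd (mu_refl _) (mu_mul hsp hup)
  have k2 : skewAdd ((s * star s) \ (u * star u)) ((s * star s) * (u * star u))
      = s * star s := by
    rw [skewAdd_eq_sup (idem_compat hD hpq)]
    exact sdiff_sup _ _ (idem_ms s) (idem_ms u)
  rw [k2] at k1
  exact mu_trans k1 (mu_symm hsp)

attribute [local instance] qIS

lemma q_compat {s u : T}
    (h : Compat (Quot.mk (muRel (S := T)) s) (Quot.mk (muRel (S := T)) u)) :
    muRel ((s * star u) * (s * star u)) (s * star u) ∧
      muRel ((star s * u) * (star s * u)) (star s * u) :=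
  ⟨(mk_eq_mk (a := (s * star u) * (s * star u)) (b := s * star u)).1 h.1,
   (mk_eq_mk (a := (star s * u) * (star s * u)) (b := star s * u)).1 h.2⟩

def qBIS : BooleanInverseSemigroup0 (Quot (muRel (S := T))) where
  toInverseSemigroup0 := qIS
  max := qsup
  sdiff := qsdiff
  le_sup_left := by
    intro x y hxy
    induction x using Quot.ind; rename_i s
    induction y using Quot.ind; rename_i u
    obtain ⟨hA, hB⟩ := q_compat hxy
    exact (mk_eq_mk (a := s) (b := skewAdd s u * star s * s)).2 (reps_le_sup_left hA hB)
  le_sup_right := by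
    intro x y hxy
    induction x using Quot.ind; rename_i s
    induction y using Quot.ind; rename_i u
    obtain ⟨hA, hB⟩ := q_compat hxy
    exact (mk_eq_mk (a := u) (b := skewAdd s u * star u * u)).2 (reps_le_sup_right hA hB)
  sup_le := by
    intro x y z hxy h1 h2
    induction x using Quot.ind; rename_i s
    induction y using Quot.ind; rename_i u
    induction z using Quot.ind; rename_i w
    obtain ⟨hA, hB⟩ := q_compat hxy
    refine (mk_eq_mk (a := skewAdd s u)
      (b := w * star (skewAdd s u) * (skewAdd s u))).2 ?_
    exact reps_sup_le hA hB ((mk_eq_mk (a := s) (b := w * star s * s)).1 h1)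
      ((mk_eq_mk (a := u) (b := w * star u * u)).1 h2)
  mul_sup := by
    intro a x y hxy
    induction a using Quot.ind; rename_i d
    induction x using Quot.ind; rename_i s
    induction y using Quot.ind; rename_i u
    obtain ⟨hA, hB⟩ := q_compat hxy
    exact (mk_eq_mk (a := d * skewAdd s u) (b := skewAdd (d * s) (d * u))).2
      (reps_mul_sup d hA hB)
  sup_mul := by
    intro a x y hxy
    induction a using Quot.ind; rename_i d
    induction x using Quot.ind; rename_i s
    induction y using Quot.ind; rename_i u
    obtain ⟨hA, hB⟩ := q_compat hxy
    exact (mk_eq_mk (a := skewAdd s u * d) (b := skewAdd (s * d) (u * d))).2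
      (reps_sup_mul d hA hB)
  sdiff_idem := by
    intro x y hx hy
    induction x using Quot.ind; rename_i s
    induction y using Quot.ind; rename_i u
    have hD := sdiff_idem (s * star s) (u * star u) (idem_ms s) (idem_ms u)
    exact (mk_eq_mk (a := ((s * star s) \ (u * star u)) * ((s * star s) \ (u * star u)))
      (b := (s * star s) \ (u * star u))).2 (by rw [hD.eq]; exact mu_refl _)
  sdiff_le := by
    intro x y hx hy
    induction x using Quot.ind; rename_i s
    induction y using Quot.ind; rename_i u
    have hs : muRel (s * s) s := (mk_eq_mk (a := s * s) (b := s)).1 hx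
    exact (mk_eq_mk (a := (s * star s) \ (u * star u))
      (b := s * star ((s * star s) \ (u * star u)) * ((s * star s) \ (u * star u)))).2
      (reps_sdiff_le hs)
  sdiff_mul := by
    intro x y hx hy
    induction x using Quot.ind; rename_i s
    induction y using Quot.ind; rename_i u
    have hu : muRel (u * u) u := (mk_eq_mk (a := u * u) (b := u)).1 hy
    exact (mk_eq_mk (a := ((s * star s) \ (u * star u)) * u) (b := 0)).2
      (reps_sdiff_mul hu)
  sdiff_sup := by
    intro x y hx hy
    induction x using Quot.ind; rename_i s
    induction y using Quot.ind; rename_i u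
    have hs : muRel (s * s) s := (mk_eq_mk (a := s * s) (b := s)).1 hx
    have hu : muRel (u * u) u := (mk_eq_mk (a := u * u) (b := u)).1 hy
    exact (mk_eq_mk (a := skewAdd ((s * star s) \ (u * star u)) (s * u)) (b := s)).2
      (reps_sdiff_sup hs hu)

end QuotBIS

/-- The maximal idempotent-separating congruence `μ` of a Boolean inverse semigroup is
compatible with skew difference and skew addition (and with joins of compatible pairs);
consequently the quotient `S/μ` is a Boolean inverse semigroup and the natural
projection `S → S/μ` is additive. -/
theorem stmt3 (S : Type*) [BooleanInverseSemigroup0 S] :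
    (∀ s₁ s₂ t₁ t₂ : S, muRel s₁ s₂ → muRel t₁ t₂ →
        muRel (skewDiff s₁ t₁) (skewDiff s₂ t₂)) ∧
    (∀ s₁ s₂ t₁ t₂ : S, muRel s₁ s₂ → muRel t₁ t₂ →
        muRel (skewAdd s₁ t₁) (skewAdd s₂ t₂)) ∧
    (∀ s₁ s₂ t₁ t₂ : S, muRel s₁ s₂ → muRel t₁ t₂ → Compat s₁ t₁ → Compat s₂ t₂ →
        muRel (s₁ ⊔ t₁) (s₂ ⊔ t₂)) ∧
    ∃ _ : BooleanInverseSemigroup0 (Quot (muRel (S := S))),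
      IsAdditiveProj (Quot.mk (muRel (S := S))) := by
  refine ⟨fun s₁ s₂ t₁ t₂ hs ht => mu_skewDiff hs ht,
    fun s₁ s₂ t₁ t₂ hs ht => mu_skewAdd hs ht,
    fun s₁ s₂ t₁ t₂ hs ht h1 h2 => mu_sup hs ht h1 h2,
    qBIS, ?_, ?_, ?_⟩
  · rfl
  · intro a b; rfl
  · intro a b h
    show Quot.mk _ (a ⊔ b) = Quot.mk (muRel (S := S)) (skewAdd a b)
    exact congrArg (Quot.mk _) (skewAdd_eq_sup h).symm
end
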